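/- arXiv:2201.06729 — 7 statements merged into one kernel-verified Lean document; each statement's English description precedes it below -/
import Mathlib

section
/- Let Σ be a signed graph on n vertices, let r, s, t be distinct vertices with rs a positive edge and rt a negative edge of Σ, and let Σ' be the signed graph obtained from Σ by reversing the signs of the edges rs and rt. Let X = (x_1,…,x_n)ᵀ be a unit eigenvector of A(Σ) corresponding to λ_n(A(Σ)). If x_r(x_s − x_t) ≥ 0, then λ_n(A(Σ)) ≥ λ_n(A(Σ')); moreover, if in addition x_r ≠ 0 or x_s ≠ x_t, then λ_n(A(Σ)) > λ_n(A(Σ')). -/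
/-- The least (real) eigenvalue `λₙ` of a matrix. -/
noncomputable def lambdaMin {V : Type*} [Fintype V] (M : Matrix V V ℝ) : ℝ :=
  sInf {μ : ℝ | ∃ x : V → ℝ, x ≠ 0 ∧ M.mulVec x = μ • x}

/-- `σ` is a signature for `G`: symmetric, and `±1` on every edge. -/
def EdgeSigns {V : Type*} (G : SimpleGraph V) (σ : V → V → ℝ) : Prop :=
  (∀ u v, σ u v = σ v u) ∧ ∀ u v, G.Adj u v → σ u v = 1 ∨ σ u v = -1

open scoped Classical in
/-- The adjacency matrix of the signed graph `(G, σ)`. -/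
noncomputable def signedAdj {V : Type*} (G : SimpleGraph V) (σ : V → V → ℝ) : Matrix V V ℝ :=
  fun i j => if G.Adj i j then σ i j else 0

open Matrix

namespace Stmt6Aux

variable {n : ℕ} {M : Matrix (Fin n) (Fin n) ℝ}

lemma dotON (hM : M.IsHermitian) (i j : Fin n) :
    ⇑(hM.eigenvectorBasis i) ⬝ᵥ ⇑(hM.eigenvectorBasis j) = if i = j then 1 else 0 := by
  have h := hM.eigenvectorBasis.orthonormal
  rw [orthonormal_iff_ite] at h
  simpa [PiLp.inner_apply, dotProduct, RCLike.inner_apply, mul_comm] using h i j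

lemma expand (hM : M.IsHermitian) (x : Fin n → ℝ) :
    x = ∑ i, (⇑(hM.eigenvectorBasis i) ⬝ᵥ x) • ⇑(hM.eigenvectorBasis i) := by
  set b := hM.eigenvectorBasis
  have h := b.sum_repr' ((WithLp.equiv 2 (Fin n → ℝ)).symm x)
  have h2 := congr((WithLp.linearEquiv 2 ℝ (Fin n → ℝ)) $h)
  rw [map_sum] at h2
  simp only [_root_.map_smul] at h2
  have hc : ∀ i, (inner ℝ (b i) ((WithLp.equiv 2 (Fin n → ℝ)).symm x) : ℝ) = ⇑(b i) ⬝ᵥ x := by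
    intro i
    simp [PiLp.inner_apply, RCLike.inner_apply, dotProduct, WithLp.equiv_symm_apply, mul_comm]
  have h3 : ∀ y : EuclideanSpace ℝ (Fin n), (WithLp.linearEquiv 2 ℝ (Fin n → ℝ)) y = ⇑y :=
    fun _ => rfl
  rw [h3] at h2
  simp only [hc, h3] at h2
  exact h2.symm

lemma dot_key (hM : M.IsHermitian) (u v : Fin n → ℝ) :
    (∑ i, u i • ⇑(hM.eigenvectorBasis i)) ⬝ᵥ (∑ j, v j • ⇑(hM.eigenvectorBasis j))
      = ∑ i, u i * v i := by
  set B : Fin n → Fin n → ℝ := fun i => ⇑(hM.eigenvectorBasis i) with hB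
  have hON : ∀ i j, ∑ k, B i k * B j k = if i = j then 1 else 0 := fun i j => dotON hM i j
  simp only [dotProduct, Finset.sum_apply, Pi.smul_apply, smul_eq_mul]
  calc ∑ k, (∑ i, u i * B i k) * (∑ j, v j * B j k)
      = ∑ k, ∑ i, ∑ j, (u i * v j) * (B i k * B j k) := by
        refine Finset.sum_congr rfl fun k _ => ?_
        rw [Finset.sum_mul_sum]
        exact Finset.sum_congr rfl fun i _ => Finset.sum_congr rfl fun j _ => by ring
    _ = ∑ i, ∑ j, (u i * v j) * ∑ k, (B i k * B j k) := by
        rw [Finset.sum_comm]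
        exact Finset.sum_congr rfl fun i _ => by rw [Finset.sum_comm]; simp [Finset.mul_sum]
    _ = ∑ i, u i * v i := by
        simp only [hON]
        simp [Finset.sum_ite_eq]

lemma lambdaMin_le (hM : M.IsHermitian) (i : Fin n) : lambdaMin M ≤ hM.eigenvalues i := by
  have hmem : hM.eigenvalues i ∈ {μ : ℝ | ∃ x : Fin n → ℝ, x ≠ 0 ∧ M.mulVec x = μ • x} := by
    refine ⟨⇑(hM.eigenvectorBasis i), ?_, hM.mulVec_eigenvectorBasis i⟩
    intro h0
    have := dotON hM i i
    rw [h0] at this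
    simp [dotProduct] at this
  have hsub : {μ : ℝ | ∃ x : Fin n → ℝ, x ≠ 0 ∧ M.mulVec x = μ • x}
      ⊆ Set.range hM.eigenvalues := by
    rintro c ⟨x, hx0, hx⟩
    by_contra hc
    apply hx0
    have hcoef : ∀ j, ⇑(hM.eigenvectorBasis j) ⬝ᵥ x = 0 := by
      intro j
      have h1 : ⇑(hM.eigenvectorBasis j) ⬝ᵥ (M *ᵥ x)
          = hM.eigenvalues j * (⇑(hM.eigenvectorBasis j) ⬝ᵥ x) := by
        rw [dotProduct_mulVec, ← mulVec_transpose]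
        have ht : Mᵀ = M := by
          have := hM.eq
          rwa [conjTranspose_eq_transpose_of_trivial] at this
        rw [ht, hM.mulVec_eigenvectorBasis j, smul_dotProduct, smul_eq_mul]
      have h2 : ⇑(hM.eigenvectorBasis j) ⬝ᵥ (M *ᵥ x)
          = c * (⇑(hM.eigenvectorBasis j) ⬝ᵥ x) := by
        rw [hx, dotProduct_smul, smul_eq_mul]
      have hne : hM.eigenvalues j ≠ c := fun h => hc ⟨j, h⟩
      have := h1.symm.trans h2
      rcases mul_eq_mul_right_iff.1 this with h | h
      · exact absurd h hne
      · exact h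
    have := expand hM x
    simp only [hcoef, zero_smul, Finset.sum_const_zero] at this
    exact this
  exact csInf_le (((Set.finite_range hM.eigenvalues).subset hsub).bddBelow) hmem

lemma rayleigh (hM : M.IsHermitian) (x : Fin n → ℝ) (hx : ∑ i, x i ^ 2 = 1) :
    lambdaMin M ≤ x ⬝ᵥ (M *ᵥ x) ∧
    (x ⬝ᵥ (M *ᵥ x) ≤ lambdaMin M → M.mulVec x = lambdaMin M • x) := by
  set b := hM.eigenvectorBasis with hb
  set μ := hM.eigenvalues with hμ
  set c : Fin n → ℝ := fun i => ⇑(b i) ⬝ᵥ x with hc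
  have hexp : x = ∑ i, c i • ⇑(b i) := expand hM x
  have hMx : M *ᵥ x = ∑ i, (c i * μ i) • ⇑(b i) := by
    conv_lhs => rw [hexp]
    rw [← mulVecLin_apply, map_sum]
    simp only [mulVecLin_apply]
    refine Finset.sum_congr rfl fun i _ => ?_
    rw [mulVec_smul, hM.mulVec_eigenvectorBasis i, smul_smul]
  have hsumsq : ∑ i, c i ^ 2 = 1 := by
    have h1 : x ⬝ᵥ x = ∑ i, c i * c i := by
      conv_lhs => rw [hexp]
      exact dot_key hM c c
    have h2 : x ⬝ᵥ x = 1 := by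
      rw [← hx]; simp [dotProduct, sq]
    rw [h2] at h1
    rw [show ∑ i, c i ^ 2 = ∑ i, c i * c i from Finset.sum_congr rfl fun i _ => sq (c i)]
    exact h1.symm
  have hray : x ⬝ᵥ (M *ᵥ x) = ∑ i, μ i * c i ^ 2 := by
    rw [hMx]
    conv_lhs => rw [hexp]
    rw [dot_key hM c (fun i => c i * μ i)]
    exact Finset.sum_congr rfl fun i _ => by ring
  have hlb : ∀ i, lambdaMin M * c i ^ 2 ≤ μ i * c i ^ 2 := fun i =>
    mul_le_mul_of_nonneg_right (lambdaMin_le hM i) (sq_nonneg _)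
  have hlam : lambdaMin M = ∑ i, lambdaMin M * c i ^ 2 := by
    rw [← Finset.mul_sum, hsumsq, mul_one]
  constructor
  · rw [hray, hlam]
    exact Finset.sum_le_sum fun i _ => hlb i
  · intro hle
    have heq : ∀ i ∈ Finset.univ, lambdaMin M * c i ^ 2 = μ i * c i ^ 2 := by
      have hge : ∑ i, μ i * c i ^ 2 ≤ ∑ i, lambdaMin M * c i ^ 2 := by
        rw [← hlam, ← hray]; exact hle
      exact fun i hi =>
        ((Finset.sum_eq_sum_iff_of_le fun i _ => hlb i).1
          (le_antisymm (Finset.sum_le_sum fun i _ => hlb i) hge) i hi)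
    have hkey : ∀ i, c i * μ i = lambdaMin M * c i := by
      intro i
      have := heq i (Finset.mem_univ i)
      rcases eq_or_ne (c i) 0 with h0 | h0
      · rw [h0]; ring
      · have h2 : lambdaMin M = μ i := mul_right_cancel₀ (pow_ne_zero 2 h0) this
        rw [← h2]; ring
    rw [hMx]
    simp only [hkey]
    rw [hexp, Finset.smul_sum]
    exact Finset.sum_congr rfl fun i _ => by rw [smul_smul]

end Stmt6Aux

lemma herm_signedAdj {V : Type*} [Fintype V] (G : SimpleGraph V) (σ : V → V → ℝ)
    (hsym : ∀ u v, G.Adj u v → σ u v = σ v u) : (signedAdj G σ).IsHermitian := by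
  rw [Matrix.IsHermitian, Matrix.conjTranspose_eq_transpose_of_trivial]
  ext i j
  simp only [Matrix.transpose_apply, signedAdj]
  by_cases h : G.Adj i j
  · rw [if_pos h, if_pos (G.adj_symm h), hsym j i (G.adj_symm h)]
  · rw [if_neg h, if_neg (fun h' => h (G.adj_symm h'))]

/-- Let `rs` be a positive edge and `rt` a negative edge of `Σ`, and let `Σ'`
be obtained by reversing the signs of `rs` and `rt`. If `X` is a unit eigenvector of
`A(Σ)` for `λₙ(A(Σ))` and `x_r(x_s - x_t) ≥ 0`, then `λₙ(A(Σ)) ≥ λₙ(A(Σ'))`; if moreover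
`x_r ≠ 0` or `x_s ≠ x_t`, then the inequality is strict. -/
theorem stmt6 (n : ℕ) (G : SimpleGraph (Fin n)) (σ σ' : Fin n → Fin n → ℝ)
    (hσ : EdgeSigns G σ) (r s t : Fin n)
    (hrs : r ≠ s) (hrt : r ≠ t) (hst : s ≠ t)
    (hars : G.Adj r s) (hpos : σ r s = 1)
    (hart : G.Adj r t) (hneg : σ r t = -1)
    (hflip : ∀ i j : Fin n, σ' i j =
      if (i = r ∧ j = s) ∨ (i = s ∧ j = r) ∨ (i = r ∧ j = t) ∨ (i = t ∧ j = r)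
      then -σ i j else σ i j)
    (X : Fin n → ℝ) (hunit : ∑ i, X i ^ 2 = 1)
    (hX : (signedAdj G σ).mulVec X = lambdaMin (signedAdj G σ) • X)
    (hsign : 0 ≤ X r * (X s - X t)) :
    lambdaMin (signedAdj G σ') ≤ lambdaMin (signedAdj G σ) ∧
    ((X r ≠ 0 ∨ X s ≠ X t) → lambdaMin (signedAdj G σ') < lambdaMin (signedAdj G σ)) := by
  set M := signedAdj G σ with hMdef
  set M' := signedAdj G σ' with hM'def
  have hM' : M'.IsHermitian := by
    apply herm_signedAdj
    intro u v _
    rw [hflip u v, hflip v u, hσ.1 u v]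
    exact if_congr (by tauto) rfl rfl
  have hXX : X ⬝ᵥ X = 1 := by
    rw [← hunit]; simp [dotProduct, sq]
  have hray := Stmt6Aux.rayleigh hM' X hunit
  -- decomposition of M'
  have hpos' : σ s r = 1 := (hσ.1 s r).trans hpos
  have hneg' : σ t r = -1 := (hσ.1 t r).trans hneg
  have hars' : G.Adj s r := hars.symm
  have hart' : G.Adj t r := hart.symm
  have hdec : M' = M + Matrix.single r s (-2) + Matrix.single s r (-2)
      + Matrix.single r t 2 + Matrix.single t r 2 := by
    ext i j
    simp only [Matrix.add_apply, Matrix.single, Matrix.of_apply]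
    show signedAdj G σ' i j = signedAdj G σ i j + _ + _ + _ + _
    simp only [signedAdj]
    rw [hflip i j]
    by_cases h1 : i = r ∧ j = s
    · obtain ⟨rfl, rfl⟩ := h1
      simp [hars, hart, hars', hart', hpos, hneg, hpos', hneg', hrs, hrt, hst,
        Ne.symm hrs, Ne.symm hrt, Ne.symm hst]
      try norm_num
    by_cases h2 : i = s ∧ j = r
    · obtain ⟨rfl, rfl⟩ := h2
      simp [hars, hart, hars', hart', hpos, hneg, hpos', hneg', hrs, hrt, hst,
        Ne.symm hrs, Ne.symm hrt, Ne.symm hst]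
      try norm_num
    by_cases h3 : i = r ∧ j = t
    · obtain ⟨rfl, rfl⟩ := h3
      simp [hars, hart, hars', hart', hpos, hneg, hpos', hneg', hrs, hrt, hst,
        Ne.symm hrs, Ne.symm hrt, Ne.symm hst]
      try norm_num
    by_cases h4 : i = t ∧ j = r
    · obtain ⟨rfl, rfl⟩ := h4
      simp [hars, hart, hars', hart', hpos, hneg, hpos', hneg', hrs, hrt, hst,
        Ne.symm hrs, Ne.symm hrt, Ne.symm hst]
      try norm_num
    · have hC : ¬((i = r ∧ j = s) ∨ (i = s ∧ j = r) ∨ (i = r ∧ j = t) ∨ (i = t ∧ j = r)) := by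
        tauto
      rw [if_neg hC]
      have e1 : ¬(r = i ∧ s = j) := fun ⟨a, b⟩ => h1 ⟨a.symm, b.symm⟩
      have e2 : ¬(s = i ∧ r = j) := fun ⟨a, b⟩ => h2 ⟨a.symm, b.symm⟩
      have e3 : ¬(r = i ∧ t = j) := fun ⟨a, b⟩ => h3 ⟨a.symm, b.symm⟩
      have e4 : ¬(t = i ∧ r = j) := fun ⟨a, b⟩ => h4 ⟨a.symm, b.symm⟩
      rw [if_neg e1, if_neg e2, if_neg e3, if_neg e4]
      ring
  -- quadratic forms
  have hmv : M' *ᵥ X = M *ᵥ X + (Function.update (0 : Fin n → ℝ) r (-2 * X s))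
      + (Function.update (0 : Fin n → ℝ) s (-2 * X r))
      + (Function.update (0 : Fin n → ℝ) r (2 * X t))
      + (Function.update (0 : Fin n → ℝ) t (2 * X r)) := by
    rw [hdec, Matrix.add_mulVec, Matrix.add_mulVec, Matrix.add_mulVec, Matrix.add_mulVec,
      Matrix.single_mulVec, Matrix.single_mulVec,
      Matrix.single_mulVec, Matrix.single_mulVec]
  have hupd : ∀ (a : Fin n) (c : ℝ), X ⬝ᵥ Function.update (0 : Fin n → ℝ) a c = X a * c := by
    intro a c
    rw [dotProduct]
    rw [Finset.sum_eq_single a]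
    · simp
    · intro b _ hb; simp [Function.update_of_ne hb]
    · simp
  have hquad : X ⬝ᵥ (M' *ᵥ X) = lambdaMin M - 4 * (X r * (X s - X t)) := by
    rw [hmv, dotProduct_add, dotProduct_add, dotProduct_add,
      dotProduct_add, hupd, hupd, hupd, hupd, hX, dotProduct_smul,
      smul_eq_mul, hXX]
    ring
  have hfirst : lambdaMin M' ≤ lambdaMin M := by
    have := hray.1
    rw [hquad] at this
    linarith
  refine ⟨hfirst, fun hor => ?_⟩
  by_contra hnot
  push_neg at hnot
  have heqlam : lambdaMin M' = lambdaMin M := le_antisymm hfirst hnot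
  rcases lt_or_eq_of_le hsign with hpos0 | hzero
  · have := hray.1
    rw [hquad, heqlam] at this
    linarith
  · have hle : X ⬝ᵥ (M' *ᵥ X) ≤ lambdaMin M' := by
      rw [hquad, heqlam, ← hzero]; ring_nf; exact le_refl _
    have heig := hray.2 hle
    rw [heqlam] at heig
    have hzero' : M' *ᵥ X = M *ᵥ X := by rw [heig, hX]
    rw [hmv] at hzero'
    have hs := congrFun hzero' s
    have hr := congrFun hzero' r
    simp only [Pi.add_apply, Function.update_of_ne hrs.symm, Function.update_of_ne hst,
      Function.update_of_ne hst.symm, Function.update_of_ne hrs, Function.update_of_ne hrt,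
      Function.update_of_ne hrt.symm, Function.update_self, Pi.zero_apply] at hs hr
    have hXr : X r = 0 := by linarith
    have hXst : X s = X t := by linarith
    rcases hor with h | h
    · exact h hXr
    · exact h hXst
end

section
/- Let Σ be a signed graph on n vertices, let r, s, t, u be distinct vertices with rs a positive edge and tu a negative edge of Σ, and let Σ' be the signed graph obtained from Σ by reversing the signs of the edges rs and tu. Let X = (x_1,…,x_n)ᵀ be a unit eigenvector of A(Σ) corresponding to λ_n(A(Σ)). If x_r x_s ≥ x_t x_u, then λ_n(A(Σ)) ≥ λ_n(A(Σ')); moreover, if in addition at least one of x_r, x_s, x_t, x_u is nonzero, then λ_n(A(Σ)) > λ_n(A(Σ')). -/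
open Matrix

lemma specSet_eq {n : ℕ} {M : Matrix (Fin n) (Fin n) ℝ} (hM : M.IsHermitian) :
    {μ : ℝ | ∃ x : Fin n → ℝ, x ≠ 0 ∧ M.mulVec x = μ • x} = Set.range hM.eigenvalues := by
  have hU1 : (hM.eigenvectorUnitary : Matrix (Fin n) (Fin n) ℝ) *
      star (hM.eigenvectorUnitary : Matrix (Fin n) (Fin n) ℝ) = 1 :=
    (Matrix.mem_unitaryGroup_iff).mp (hM.eigenvectorUnitary).2
  have hspec : M = (hM.eigenvectorUnitary : Matrix (Fin n) (Fin n) ℝ) *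
      Matrix.diagonal hM.eigenvalues * star (hM.eigenvectorUnitary : Matrix (Fin n) (Fin n) ℝ) := by
    simpa using hM.spectral_theorem
  set U := (hM.eigenvectorUnitary : Matrix (Fin n) (Fin n) ℝ) with hUdef
  ext μ
  constructor
  · rintro ⟨x, hx0, hx⟩
    set y := star U *ᵥ x with hydef
    have hUy : U *ᵥ y = x := by
      rw [hydef, Matrix.mulVec_mulVec, hU1, Matrix.one_mulVec]
    have hy0 : y ≠ 0 := by
      intro h
      apply hx0
      rw [← hUy, h, Matrix.mulVec_zero]
    have hU2 : star U * U = 1 := (Matrix.mem_unitaryGroup_iff').mp (hM.eigenvectorUnitary).2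
    have hcancel : ∀ z : Fin n → ℝ, star U *ᵥ (U *ᵥ z) = z := fun z => by
      rw [Matrix.mulVec_mulVec, hU2, Matrix.one_mulVec]
    have hDy : Matrix.diagonal hM.eigenvalues *ᵥ y = μ • y := by
      have h1 : U *ᵥ (Matrix.diagonal hM.eigenvalues *ᵥ y) = μ • x := by
        rw [Matrix.mulVec_mulVec, hydef, Matrix.mulVec_mulVec, ← hspec, hx]
      have h2 := congrArg (fun z => star U *ᵥ z) h1
      simpa only [hcancel, Matrix.mulVec_smul] using h2
    obtain ⟨i, hi⟩ := Function.ne_iff.mp hy0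
    refine ⟨i, ?_⟩
    have := congrFun hDy i
    rw [Matrix.mulVec_diagonal] at this
    have : hM.eigenvalues i * y i = μ * y i := this
    exact mul_right_cancel₀ hi this
  · rintro ⟨i, rfl⟩
    exact ⟨_, (WithLp.ofLp_eq_zero 2).ne.2 <| hM.eigenvectorBasis.orthonormal.ne_zero i, hM.mulVec_eigenvectorBasis i⟩

lemma quadform_decomp {n : ℕ} {M : Matrix (Fin n) (Fin n) ℝ} (hM : M.IsHermitian)
    (x : Fin n → ℝ) :
    ∃ y : Fin n → ℝ, (∑ i, y i ^ 2 = ∑ i, x i ^ 2) ∧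
      dotProduct x (M *ᵥ x) = ∑ i, hM.eigenvalues i * y i ^ 2 ∧
      ∀ μ : ℝ, (∀ i, hM.eigenvalues i * y i = μ * y i) → M *ᵥ x = μ • x := by
  have hU1 : (hM.eigenvectorUnitary : Matrix (Fin n) (Fin n) ℝ) *
      star (hM.eigenvectorUnitary : Matrix (Fin n) (Fin n) ℝ) = 1 :=
    (Matrix.mem_unitaryGroup_iff).mp (hM.eigenvectorUnitary).2
  have hspec : M = (hM.eigenvectorUnitary : Matrix (Fin n) (Fin n) ℝ) *
      Matrix.diagonal hM.eigenvalues * star (hM.eigenvectorUnitary : Matrix (Fin n) (Fin n) ℝ) := by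
    simpa using hM.spectral_theorem
  set U := (hM.eigenvectorUnitary : Matrix (Fin n) (Fin n) ℝ) with hUdef
  refine ⟨star U *ᵥ x, ?_, ?_, ?_⟩
  all_goals
    have hsU : star U *ᵥ x = x ᵥ* U := by
      have : star U = Uᵀ := by
        ext i j
        simp [Matrix.star_apply]
      rw [this, Matrix.mulVec_transpose]
    have hUy : U *ᵥ (star U *ᵥ x) = x := by
      rw [Matrix.mulVec_mulVec, hU1, Matrix.one_mulVec]
  · have : dotProduct (star U *ᵥ x) (star U *ᵥ x) = dotProduct x x := by
      nth_rewrite 1 [hsU]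
      rw [← dotProduct_mulVec, hUy]
    simpa [pow_two, dotProduct] using this
  · have h1 : M *ᵥ x = U *ᵥ (Matrix.diagonal hM.eigenvalues *ᵥ (star U *ᵥ x)) := by
      rw [Matrix.mulVec_mulVec, Matrix.mulVec_mulVec, ← hspec]
    rw [h1, dotProduct_mulVec, ← hsU]
    simp only [dotProduct, Matrix.mulVec_diagonal]
    exact Finset.sum_congr rfl fun i _ => by ring
  · intro μ hμ
    have hDy : Matrix.diagonal hM.eigenvalues *ᵥ (star U *ᵥ x) = μ • (star U *ᵥ x) := by
      funext i
      rw [Matrix.mulVec_diagonal]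
      exact hμ i
    calc M *ᵥ x = U *ᵥ (Matrix.diagonal hM.eigenvalues *ᵥ (star U *ᵥ x)) := by
          rw [Matrix.mulVec_mulVec, Matrix.mulVec_mulVec, ← hspec]
      _ = U *ᵥ (μ • (star U *ᵥ x)) := by rw [hDy]
      _ = μ • x := by rw [Matrix.mulVec_smul, hUy]

lemma lambdaMin_key {n : ℕ} (hn : 0 < n) {M : Matrix (Fin n) (Fin n) ℝ} (hM : M.IsHermitian)
    (x : Fin n → ℝ) (hx : ∑ i, x i ^ 2 = 1) :
    lambdaMin M ≤ dotProduct x (M *ᵥ x) ∧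
      (dotProduct x (M *ᵥ x) ≤ lambdaMin M → M *ᵥ x = lambdaMin M • x) := by
  have : Nonempty (Fin n) := ⟨⟨0, hn⟩⟩
  have hset : lambdaMin M = sInf (Set.range hM.eigenvalues) := by
    rw [lambdaMin, specSet_eq hM]
  have hbdd : BddBelow (Set.range hM.eigenvalues) := (Set.finite_range _).bddBelow
  have hle : ∀ i, lambdaMin M ≤ hM.eigenvalues i := fun i => by
    rw [hset]; exact csInf_le hbdd ⟨i, rfl⟩
  obtain ⟨y, ha, hb, hc⟩ := quadform_decomp hM x
  have hy1 : ∑ i, y i ^ 2 = 1 := ha.trans hx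
  have hlow : lambdaMin M ≤ dotProduct x (M *ᵥ x) := by
    rw [hb]
    calc lambdaMin M = ∑ i, lambdaMin M * y i ^ 2 := by
          rw [← Finset.mul_sum, hy1, mul_one]
      _ ≤ ∑ i, hM.eigenvalues i * y i ^ 2 :=
          Finset.sum_le_sum fun i _ => mul_le_mul_of_nonneg_right (hle i) (sq_nonneg _)
  refine ⟨hlow, fun hq => ?_⟩
  have hterm : ∀ i ∈ Finset.univ, 0 ≤ (hM.eigenvalues i - lambdaMin M) * y i ^ 2 :=
    fun i _ => mul_nonneg (sub_nonneg.mpr (hle i)) (sq_nonneg _)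
  have hsum0 : ∑ i, (hM.eigenvalues i - lambdaMin M) * y i ^ 2 = 0 := by
    have h1 : ∑ i, (hM.eigenvalues i - lambdaMin M) * y i ^ 2
        = (∑ i, hM.eigenvalues i * y i ^ 2) - lambdaMin M := by
      simp only [sub_mul]
      rw [Finset.sum_sub_distrib, ← Finset.mul_sum, hy1, mul_one]
    have h2 : ∑ i, (hM.eigenvalues i - lambdaMin M) * y i ^ 2 ≤ 0 := by
      rw [h1, sub_nonpos, ← hb]
      exact hq
    exact le_antisymm h2 (Finset.sum_nonneg hterm)
  have hzero := (Finset.sum_eq_zero_iff_of_nonneg hterm).mp hsum0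
  apply hc
  intro i
  rcases mul_eq_zero.mp (hzero i (Finset.mem_univ i)) with h | h
  · rw [sub_eq_zero.mp h]
  · rw [pow_eq_zero_iff (by norm_num)] at h
    rw [h, mul_zero, mul_zero]

/-- Let `rs` be a positive edge and `tu` a negative edge of `Σ` (with
`r, s, t, u` distinct), and let `Σ'` be obtained by reversing the signs of `rs` and `tu`.
If `X` is a unit eigenvector of `A(Σ)` for `λₙ(A(Σ))` and `x_r x_s ≥ x_t x_u`, then
`λₙ(A(Σ)) ≥ λₙ(A(Σ'))`; if moreover one of `x_r, x_s, x_t, x_u` is nonzero, then the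
inequality is strict. -/
theorem stmt7 (n : ℕ) (G : SimpleGraph (Fin n)) (σ σ' : Fin n → Fin n → ℝ)
    (hσ : EdgeSigns G σ) (r s t u : Fin n)
    (hrs : r ≠ s) (hrt : r ≠ t) (hru : r ≠ u) (hst : s ≠ t) (hsu : s ≠ u) (htu : t ≠ u)
    (hars : G.Adj r s) (hpos : σ r s = 1)
    (hatu : G.Adj t u) (hneg : σ t u = -1)
    (hflip : ∀ i j : Fin n, σ' i j =
      if (i = r ∧ j = s) ∨ (i = s ∧ j = r) ∨ (i = t ∧ j = u) ∨ (i = u ∧ j = t)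
      then -σ i j else σ i j)
    (X : Fin n → ℝ) (hunit : ∑ i, X i ^ 2 = 1)
    (hX : (signedAdj G σ).mulVec X = lambdaMin (signedAdj G σ) • X)
    (hsign : X t * X u ≤ X r * X s) :
    lambdaMin (signedAdj G σ') ≤ lambdaMin (signedAdj G σ) ∧
    ((X r ≠ 0 ∨ X s ≠ 0 ∨ X t ≠ 0 ∨ X u ≠ 0) →
      lambdaMin (signedAdj G σ') < lambdaMin (signedAdj G σ)) := by
  have hn : 0 < n := r.pos
  set A := signedAdj G σ with hA
  set A' := signedAdj G σ' with hA'
  -- symmetry of A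
  have hsymA : ∀ i j, A j i = A i j := by
    intro i j
    by_cases h : G.Adj i j
    · simp [hA, signedAdj, h, h.symm, hσ.1 j i]
    · have h' : ¬ G.Adj j i := fun hh => h hh.symm
      simp [hA, signedAdj, h, h']
  have hHerm : A.IsHermitian := by
    ext i j
    simp [Matrix.conjTranspose_apply, hsymA i j]
  -- symmetry of σ'
  have hσ'sym : ∀ i j, σ' j i = σ' i j := by
    intro i j
    rw [hflip i j, hflip j i]
    have hcond : ((j = r ∧ i = s) ∨ (j = s ∧ i = r) ∨ (j = t ∧ i = u) ∨ (j = u ∧ i = t)) ↔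
        ((i = r ∧ j = s) ∨ (i = s ∧ j = r) ∨ (i = t ∧ j = u) ∨ (i = u ∧ j = t)) := by
      tauto
    by_cases h : (i = r ∧ j = s) ∨ (i = s ∧ j = r) ∨ (i = t ∧ j = u) ∨ (i = u ∧ j = t)
    · rw [if_pos h, if_pos (hcond.mpr h), hσ.1 j i]
    · rw [if_neg h, if_neg (fun hh => h (hcond.mp hh)), hσ.1 j i]
  have hsymA' : ∀ i j, A' j i = A' i j := by
    intro i j
    by_cases h : G.Adj i j
    · simp [hA', signedAdj, h, h.symm, hσ'sym i j]
    · have h' : ¬ G.Adj j i := fun hh => h hh.symm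
      simp [hA', signedAdj, h, h']
  have hHerm' : A'.IsHermitian := by
    ext i j
    simp [Matrix.conjTranspose_apply, hsymA' i j]
  -- the perturbation matrix
  set P : Matrix (Fin n) (Fin n) ℝ :=
    Matrix.single r s (-2) + Matrix.single s r (-2)
      + Matrix.single t u 2 + Matrix.single u t 2 with hP
  have hsr : σ s r = 1 := (hσ.1 s r).trans hpos
  have hut : σ u t = -1 := (hσ.1 u t).trans hneg
  have hA'eq : A' = A + P := by
    ext i j
    by_cases h1 : i = r ∧ j = s
    · obtain ⟨rfl, rfl⟩ := h1
      simp [hA, hA', hP, signedAdj, hars, hflip, hpos, Matrix.single,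
        hrs, hrt, hru, hst, hsu, htu, hrs.symm, hrt.symm, hru.symm, hst.symm, hsu.symm, htu.symm]
      norm_num
    · by_cases h2 : i = s ∧ j = r
      · obtain ⟨rfl, rfl⟩ := h2
        simp [hA, hA', hP, signedAdj, hars.symm, hflip, hsr, Matrix.single,
          hrs, hrt, hru, hst, hsu, htu, hrs.symm, hrt.symm, hru.symm, hst.symm, hsu.symm, htu.symm]
        norm_num
      · by_cases h3 : i = t ∧ j = u
        · obtain ⟨rfl, rfl⟩ := h3
          simp [hA, hA', hP, signedAdj, hatu, hflip, hneg, Matrix.single,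
            hrs, hrt, hru, hst, hsu, htu, hrs.symm, hrt.symm, hru.symm, hst.symm, hsu.symm,
            htu.symm]
          norm_num
        · by_cases h4 : i = u ∧ j = t
          · obtain ⟨rfl, rfl⟩ := h4
            simp [hA, hA', hP, signedAdj, hatu.symm, hflip, hut, Matrix.single,
              hrs, hrt, hru, hst, hsu, htu, hrs.symm, hrt.symm, hru.symm, hst.symm, hsu.symm,
              htu.symm]
            norm_num
          · have hσeq : σ' i j = σ i j := by
              rw [hflip i j, if_neg]
              tauto
            have h1' : ¬(r = i ∧ s = j) := fun hh => h1 ⟨hh.1.symm, hh.2.symm⟩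
            have h2' : ¬(s = i ∧ r = j) := fun hh => h2 ⟨hh.1.symm, hh.2.symm⟩
            have h3' : ¬(t = i ∧ u = j) := fun hh => h3 ⟨hh.1.symm, hh.2.symm⟩
            have h4' : ¬(u = i ∧ t = j) := fun hh => h4 ⟨hh.1.symm, hh.2.symm⟩
            simp [hA, hA', hP, signedAdj, hσeq, Matrix.single, h1', h2', h3', h4']
  -- P *ᵥ X
  have hPX : P *ᵥ X = Function.update (0 : Fin n → ℝ) r (-2 * X s)
      + Function.update (0 : Fin n → ℝ) s (-2 * X r)
      + Function.update (0 : Fin n → ℝ) t (2 * X u)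
      + Function.update (0 : Fin n → ℝ) u (2 * X t) := by
    rw [hP, Matrix.add_mulVec, Matrix.add_mulVec, Matrix.add_mulVec,
      Matrix.single_mulVec, Matrix.single_mulVec,
      Matrix.single_mulVec, Matrix.single_mulVec]
  have hdotP : dotProduct X (P *ᵥ X) = -4 * (X r * X s) + 4 * (X t * X u) := by
    rw [hPX]
    simp only [dotProduct, Pi.add_apply, Function.update_apply, Pi.zero_apply,
      mul_add, Finset.sum_add_distrib, mul_ite, mul_zero, Finset.sum_ite_eq',
      Finset.mem_univ, if_true]
    ring
  -- quadratic forms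
  have hXX : dotProduct X X = 1 := by
    simpa [dotProduct, pow_two] using hunit
  have hq : dotProduct X (A *ᵥ X) = lambdaMin A := by
    rw [hX]
    simp [dotProduct_smul, hXX]
  have hq' : dotProduct X (A' *ᵥ X)
      = lambdaMin A - 4 * (X r * X s) + 4 * (X t * X u) := by
    rw [hA'eq, Matrix.add_mulVec, dotProduct_add, hq, hdotP]
    ring
  obtain ⟨hle', heig'⟩ := lambdaMin_key hn hHerm' X hunit
  have hmain : lambdaMin A' ≤ lambdaMin A := by
    rw [hq'] at hle'
    linarith
  refine ⟨hmain, fun hnz => ?_⟩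
  by_contra hlt
  have heq : lambdaMin A' = lambdaMin A := le_antisymm hmain (not_lt.mp hlt)
  have hqle : dotProduct X (A' *ᵥ X) ≤ lambdaMin A' := by
    rw [hq', heq]
    linarith
  have hE := heig' hqle
  have hP0 : P *ᵥ X = 0 := by
    have h1 : A *ᵥ X + P *ᵥ X = A *ᵥ X := by
      rw [← Matrix.add_mulVec, ← hA'eq, hE, heq, hX]
    rwa [add_eq_left] at h1
  have hbig : Function.update (0 : Fin n → ℝ) r (-2 * X s)
      + Function.update (0 : Fin n → ℝ) s (-2 * X r)
      + Function.update (0 : Fin n → ℝ) t (2 * X u)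
      + Function.update (0 : Fin n → ℝ) u (2 * X t) = 0 := by
    rw [← hPX]
    exact hP0
  have hXs : X s = 0 := by
    have h := congrFun hbig r
    simp [Function.update_apply, hrs, hrt, hru, hrs.symm, hrt.symm, hru.symm] at h
    linarith
  have hXr : X r = 0 := by
    have h := congrFun hbig s
    simp [Function.update_apply, hrs.symm, hst, hsu] at h
    linarith
  have hXu : X u = 0 := by
    have h := congrFun hbig t
    simp [Function.update_apply, hrt.symm, hst.symm, htu] at h
    linarith
  have hXt : X t = 0 := by
    have h := congrFun hbig u
    simp [Function.update_apply, hru.symm, hsu.symm, htu.symm] at h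
    linarith
  rcases hnz with h | h | h | h
  · exact h hXr
  · exact h hXs
  · exact h hXt
  · exact h hXu
end

section
/- Let n ≥ 6, let a = ⌈n/2⌉ and b = ⌊n/2⌋, and let Σ = (K_n, 𝒯^-_{a−1,b−1}) be the signed complete graph whose negative edges form the spanning tree 𝒯_{a−1,b−1}. Then λ_n(A(Σ)) > 2 − n; moreover, if n ≥ 8 then λ_n(A(Σ)) < −4. -/
open scoped Classical in
/-- Adjacency matrix of the signed complete graph `(K_n, T⁻)`: entries are `0` on the
diagonal, `-1` on edges of `T` and `+1` on all other off-diagonal positions. -/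
noncomputable def signedCompleteMatrix {n : ℕ} (T : SimpleGraph (Fin n)) :
    Matrix (Fin n) (Fin n) ℝ :=
  fun i j => if i = j then 0 else if T.Adj i j then -1 else 1

/-- The largest (real) eigenvalue `λ₁` of a matrix. -/
noncomputable def lambdaMax {V : Type*} [Fintype V] (M : Matrix V V ℝ) : ℝ :=
  sSup {μ : ℝ | ∃ x : V → ℝ, x ≠ 0 ∧ M.mulVec x = μ • x}

/-- The double star `T_{a,b}`: an edge `0 - 1` with `a` pendant vertices attached to `0`
(indices `2, …, a+1`) and `b` pendant vertices attached to `1` (indices `a+2, …, a+b+1`). -/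
def doubleStar (a b : ℕ) : SimpleGraph (Fin (a + b + 2)) :=
  SimpleGraph.fromRel (fun i j =>
    ((i : ℕ) = 0 ∧ (j : ℕ) = 1) ∨
    ((i : ℕ) = 0 ∧ 2 ≤ (j : ℕ) ∧ (j : ℕ) < a + 2) ∨
    ((i : ℕ) = 1 ∧ a + 2 ≤ (j : ℕ)))

/-- The tree `𝒯_{a-1,b-1}` on `a + b` vertices: a star `K_{1,a-1}` with center `0` and
leaves `1, …, a-1`, a star `K_{1,b-1}` with center `a` and leaves `a+1, …, a+b-1`,
together with an edge between the pendant vertices `1` and `a+1`. -/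
def treeTT (a b : ℕ) : SimpleGraph (Fin (a + b)) :=
  SimpleGraph.fromRel (fun i j =>
    ((i : ℕ) = 0 ∧ 1 ≤ (j : ℕ) ∧ (j : ℕ) ≤ a - 1) ∨
    ((i : ℕ) = a ∧ a + 1 ≤ (j : ℕ) ∧ (j : ℕ) ≤ a + b - 1) ∨
    ((i : ℕ) = 1 ∧ (j : ℕ) = a + 1))

/-- A tree on `Fin n` is the star `K_{1,n-1}` iff some vertex is adjacent to all others. -/
def IsStar {n : ℕ} (T : SimpleGraph (Fin n)) : Prop :=
  ∃ v : Fin n, ∀ u : Fin n, u ≠ v → T.Adj v u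

section AuxiliaryLemmas

open scoped Classical
open Finset Matrix

def rTT (a b i j : ℕ) : Prop :=
  (i = 0 ∧ 1 ≤ j ∧ j < a) ∨ (i = a ∧ a + 1 ≤ j ∧ j < a + b) ∨ (i = 1 ∧ j = a + 1)

lemma treeTT_adj (a b : ℕ) (ha : 3 ≤ a) (i j : Fin (a+b)) :
    (treeTT a b).Adj i j ↔ rTT a b ↑i ↑j ∨ rTT a b ↑j ↑i := by
  rw [treeTT, SimpleGraph.fromRel_adj, ne_eq, Fin.ext_iff]
  unfold rTT
  omega

lemma rTT_disjoint (a b : ℕ) (ha : 3 ≤ a) (i j : ℕ) :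
    ¬(rTT a b i j ∧ rTT a b j i) := by unfold rTT; omega

lemma ite_or_split (p q : Prop) [Decidable p] [Decidable q] [Decidable (p ∨ q)]
    (h : ¬(p ∧ q)) (t : ℝ) :
    (if p ∨ q then t else 0) = (if p then t else 0) + (if q then t else 0) := by
  by_cases hp : p <;> by_cases hq : q <;> simp [hp, hq] <;> tauto

lemma sum_ite_prop_const (c : Prop) [Decidable c] (s : Finset ℕ) (h : ℕ → ℝ) :
    ∑ j ∈ s, (if c then h j else 0) = if c then ∑ j ∈ s, h j else 0 := by
  split_ifs <;> simp

lemma range_ite_Ico {m lo hi : ℕ} (h : hi ≤ m) (f : ℕ → ℝ) :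
    ∑ j ∈ range m, (if lo ≤ j ∧ j < hi then f j else 0) = ∑ j ∈ Ico lo hi, f j := by
  have hsub : Ico lo hi ⊆ range m := fun x hx =>
    mem_range.2 (lt_of_lt_of_le (mem_Ico.1 hx).2 h)
  have h0 : ∀ x ∈ range m, x ∉ Ico lo hi →
      (if lo ≤ x ∧ x < hi then f x else 0) = 0 := by
    intro x _ hx; rw [if_neg]; simpa [mem_Ico] using hx
  rw [← Finset.sum_subset hsub h0]
  exact Finset.sum_congr rfl fun x hx => if_pos (mem_Ico.1 hx)

lemma Qsum (a b : ℕ) (ha : 3 ≤ a) (hb : 3 ≤ b) (y : ℕ → ℝ) :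
    ∑ i : Fin (a+b), ∑ j : Fin (a+b), (if (treeTT a b).Adj i j then y ↑i * y ↑j else 0)
      = 2 * (y 0 * (∑ j ∈ Ico 1 a, y j) + y a * (∑ j ∈ Ico (a+1) (a+b), y j)
          + y 1 * y (a+1)) := by
  have step1 : ∀ i j : Fin (a+b),
      (if (treeTT a b).Adj i j then y ↑i * y ↑j else 0)
        = (if rTT a b ↑i ↑j then y ↑i * y ↑j else 0)
          + (if rTT a b ↑j ↑i then y ↑i * y ↑j else 0) := by
    intro i j
    rw [← ite_or_split _ _ (rTT_disjoint a b ha ↑i ↑j)]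
    exact if_congr (treeTT_adj a b ha i j) rfl rfl
  have hswap : ∑ i : Fin (a+b), ∑ j : Fin (a+b), (if rTT a b ↑j ↑i then y ↑i * y ↑j else 0)
      = ∑ i : Fin (a+b), ∑ j : Fin (a+b), (if rTT a b ↑i ↑j then y ↑i * y ↑j else 0) := by
    rw [Finset.sum_comm]
    exact Finset.sum_congr rfl fun i _ => Finset.sum_congr rfl fun j _ => by
      rw [mul_comm]
  have step2 : ∑ i : Fin (a+b), ∑ j : Fin (a+b),
      (if (treeTT a b).Adj i j then y ↑i * y ↑j else 0)
      = 2 * ∑ i ∈ range (a+b), ∑ j ∈ range (a+b), (if rTT a b i j then y i * y j else 0) := by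
    have hnat : ∀ i : Fin (a+b), ∑ j : Fin (a+b), (if rTT a b ↑i ↑j then y ↑i * y ↑j else 0)
        = ∑ j ∈ range (a+b), (if rTT a b ↑i j then y ↑i * y j else 0) :=
      fun i => Fin.sum_univ_eq_sum_range (fun j => if rTT a b ↑i j then y ↑i * y j else 0) (a+b)
    calc ∑ i : Fin (a+b), ∑ j : Fin (a+b), (if (treeTT a b).Adj i j then y ↑i * y ↑j else 0)
        = ∑ i : Fin (a+b), (∑ j : Fin (a+b), (if rTT a b ↑i ↑j then y ↑i * y ↑j else 0)
            + ∑ j : Fin (a+b), (if rTT a b ↑j ↑i then y ↑i * y ↑j else 0)) := by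
          refine Finset.sum_congr rfl fun i _ => ?_
          rw [← Finset.sum_add_distrib]
          exact Finset.sum_congr rfl fun j _ => step1 i j
      _ = 2 * ∑ i : Fin (a+b), ∑ j : Fin (a+b), (if rTT a b ↑i ↑j then y ↑i * y ↑j else 0) := by
          rw [Finset.sum_add_distrib, hswap]; ring
      _ = 2 * ∑ i ∈ range (a+b), ∑ j ∈ range (a+b), (if rTT a b i j then y i * y j else 0) := by
          rw [Finset.sum_congr rfl fun i (_ : i ∈ univ) => hnat i,
            Fin.sum_univ_eq_sum_range
              (fun i => ∑ j ∈ range (a+b), (if rTT a b i j then y i * y j else 0)) (a+b)]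
  rw [step2]
  congr 1
  have expand : ∀ i j : ℕ, (if rTT a b i j then y i * y j else 0)
      = (if i = 0 then (if 1 ≤ j ∧ j < a then y i * y j else 0) else 0)
        + (if i = a then (if a + 1 ≤ j ∧ j < a + b then y i * y j else 0) else 0)
        + (if i = 1 then (if j = a + 1 then y i * y j else 0) else 0) := by
    intro i j
    unfold rTT
    split_ifs <;> first | ring1 | (exfalso; omega)
  have hmem0 : (0 : ℕ) ∈ range (a+b) := Finset.mem_range.mpr (by omega)
  have hmema : a ∈ range (a+b) := Finset.mem_range.mpr (by omega)
  have hmem1 : (1 : ℕ) ∈ range (a+b) := Finset.mem_range.mpr (by omega)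
  have hmema1 : a + 1 ∈ range (a+b) := Finset.mem_range.mpr (by omega)
  have inner : ∀ i ∈ range (a+b),
      (∑ j ∈ range (a+b), if rTT a b i j then y i * y j else 0)
      = (if i = 0 then ∑ j ∈ Ico 1 a, y i * y j else 0)
        + (if i = a then ∑ j ∈ Ico (a+1) (a+b), y i * y j else 0)
        + (if i = 1 then y i * y (a+1) else 0) := by
    intro i _
    rw [Finset.sum_congr rfl (fun j _ => expand i j), Finset.sum_add_distrib,
      Finset.sum_add_distrib, sum_ite_prop_const, sum_ite_prop_const, sum_ite_prop_const]
    congr 1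
    · congr 1
      · exact if_congr Iff.rfl (range_ite_Ico (by omega) _) rfl
      · exact if_congr Iff.rfl (range_ite_Ico (by omega) _) rfl
    · refine if_congr Iff.rfl ?_ rfl
      rw [Finset.sum_ite_eq' (range (a+b)) (a+1) (fun j => y i * y j), if_pos hmema1]
  rw [Finset.sum_congr rfl inner, Finset.sum_add_distrib, Finset.sum_add_distrib,
    Finset.sum_ite_eq' (range (a+b)) 0, Finset.sum_ite_eq' (range (a+b)) a,
    Finset.sum_ite_eq' (range (a+b)) 1, if_pos hmem0, if_pos hmema, if_pos hmem1,
    ← Finset.mul_sum, ← Finset.mul_sum]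

lemma quad_form {m : ℕ} (T : SimpleGraph (Fin m)) (x : Fin m → ℝ) :
    x ⬝ᵥ (signedCompleteMatrix T) *ᵥ x
      = (∑ i, x i) ^ 2 - (∑ i, x i ^ 2)
        - 2 * ∑ i : Fin m, ∑ j : Fin m, (if T.Adj i j then x i * x j else 0) := by
  have key : ∀ i j : Fin m, x i * (signedCompleteMatrix T i j * x j)
      = x i * x j - (if i = j then x i * x j else 0)
        - 2 * (if T.Adj i j then x i * x j else 0) := by
    intro i j
    rcases eq_or_ne i j with rfl | hij
    · simp [signedCompleteMatrix, T.irrefl]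
    · by_cases hadj : T.Adj i j <;> simp [signedCompleteMatrix, hij, hadj] <;> ring
  calc x ⬝ᵥ (signedCompleteMatrix T) *ᵥ x
      = ∑ i, ∑ j, x i * (signedCompleteMatrix T i j * x j) := by
        simp [dotProduct, Matrix.mulVec, Finset.mul_sum]
    _ = ∑ i : Fin m, ∑ j : Fin m, (x i * x j - (if i = j then x i * x j else 0)
          - 2 * (if T.Adj i j then x i * x j else 0)) :=
        Finset.sum_congr rfl fun i _ => Finset.sum_congr rfl fun j _ => key i j
    _ = _ := by
        rw [Finset.sum_congr rfl (fun i (_ : i ∈ univ) => Finset.sum_sub_distrib _ _),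
          Finset.sum_sub_distrib]
        congr 1
        · rw [Finset.sum_congr rfl (fun i (_ : i ∈ univ) => Finset.sum_sub_distrib _ _),
            Finset.sum_sub_distrib]
          congr 1
          · rw [sq, Finset.sum_mul_sum]
          · refine Finset.sum_congr rfl fun i _ => ?_
            rw [Finset.sum_ite_eq univ i (fun j => x i * x j)]
            simp [sq]
        · rw [Finset.mul_sum]
          exact Finset.sum_congr rfl fun i _ => (Finset.mul_sum _ _ _).symm

/-- splitting `∑ j ∈ range (a+b)` at `0, 1, [2,a), a, a+1, [a+2, a+b)`. -/
lemma sum_range_split (a b : ℕ) (ha : 3 ≤ a) (hb : 3 ≤ b) (f : ℕ → ℝ) :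
    ∑ j ∈ range (a+b), f j
      = f 0 + f 1 + (∑ j ∈ Ico 2 a, f j) + f a + f (a+1) + ∑ j ∈ Ico (a+2) (a+b), f j := by
  rw [range_eq_Ico,
    ← Finset.sum_Ico_consecutive f (by omega : 0 ≤ 2) (by omega : 2 ≤ a+b),
    ← Finset.sum_Ico_consecutive f (by omega : 2 ≤ a) (by omega : a ≤ a+b),
    ← Finset.sum_Ico_consecutive f (by omega : a ≤ a+2) (by omega : a+2 ≤ a+b)]
  have h1 : ∑ j ∈ Ico 0 2, f j = f 0 + f 1 := by
    rw [show (2:ℕ) = 0 + 1 + 1 by rfl, Finset.sum_Ico_succ_top (by omega),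
      Finset.sum_Ico_succ_top (by omega), Finset.Ico_self, Finset.sum_empty]
    ring
  have h2 : ∑ j ∈ Ico a (a+2), f j = f a + f (a+1) := by
    rw [show a + 2 = a + 1 + 1 by rfl, Finset.sum_Ico_succ_top (by omega),
      Finset.sum_Ico_succ_top (by omega), Finset.Ico_self, Finset.sum_empty]
    ring
  rw [h1, h2]; ring



set_option maxHeartbeats 1000000 in
lemma lower_arith (c aR bR u p v q s1 s2 t1 t2 : ℝ) (hc92 : 9/2 ≤ c)
    (h4a : 4*(aR-2) ≤ 2*c + 1) (h4b : 4*(bR-2) ≤ 2*c + 1)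
    (ht1n : 0 ≤ t1) (ht2n : 0 ≤ t2)
    (hexp1 : 0 ≤ 4*(aR-2)*u^2 - 4*c*(u*s1) + c^2*t1)
    (hexp2 : 0 ≤ 4*(bR-2)*v^2 - 4*c*(v*s2) + c^2*t2) :
    (-1 - c) * (u^2 + p^2 + t1 + v^2 + q^2 + t2)
      ≤ (u + p + s1 + v + q + s2)^2 - (u^2 + p^2 + t1 + v^2 + q^2 + t2)
        - 4 * (u * (p + s1) + v * (q + s2) + p * q) := by
  have hcm2 : (0:ℝ) ≤ c - 2 := by linarith
  have hcpos : (0:ℝ) < c := by linarith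
  have A1 : (c-2) * (4*c*(u*s1)) ≤ (c-2) * (4*(aR-2)*u^2 + c^2*t1) :=
    mul_le_mul_of_nonneg_left (by linarith) hcm2
  have A2 : (c-2) * (4*c*(v*s2)) ≤ (c-2) * (4*(bR-2)*v^2 + c^2*t2) :=
    mul_le_mul_of_nonneg_left (by linarith) hcm2
  have B1 : c * (4*(c-2)*(u*p)) ≤ c * (4*u^2 + (c-2)^2*p^2) :=
    mul_le_mul_of_nonneg_left (by linarith [sq_nonneg (2*u - (c-2)*p)]) (le_of_lt hcpos)
  have B2 : c * (4*(c-2)*(v*q)) ≤ c * (4*v^2 + (c-2)^2*q^2) :=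
    mul_le_mul_of_nonneg_left (by linarith [sq_nonneg (2*v - (c-2)*q)]) (le_of_lt hcpos)
  have B3 : (c*(c-2)) * (4*(p*q)) ≤ (c*(c-2)) * (2*p^2 + 2*q^2) :=
    mul_le_mul_of_nonneg_left (by linarith [sq_nonneg (p - q)])
      (mul_nonneg (le_of_lt hcpos) hcm2)
  have hc92' : (0:ℝ) ≤ c - 9/2 := by linarith
  have hcube : (0:ℝ) ≤ c^3 - 4*c^2 - c + 2 := by
    linarith [mul_nonneg (mul_nonneg hc92' hc92') hc92', sq_nonneg (c - 9/2), hc92']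
  have hcoefa : 4*(aR-2)*(c-2) + 4*c ≤ c^2*(c-2) := by
    linarith [hcube, mul_le_mul_of_nonneg_right h4a hcm2]
  have hcoefb : 4*(bR-2)*(c-2) + 4*c ≤ c^2*(c-2) := by
    linarith [hcube, mul_le_mul_of_nonneg_right h4b hcm2]
  have HU : (4*(aR-2)*(c-2) + 4*c)*u^2 ≤ (c^2*(c-2))*u^2 :=
    mul_le_mul_of_nonneg_right hcoefa (sq_nonneg u)
  have HV : (4*(bR-2)*(c-2) + 4*c)*v^2 ≤ (c^2*(c-2))*v^2 :=
    mul_le_mul_of_nonneg_right hcoefb (sq_nonneg v)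
  have key : (c*(c-2)) * (4 * (u * (p + s1) + v * (q + s2) + p * q))
      ≤ (c*(c-2)) * (c * (u^2 + p^2 + t1 + v^2 + q^2 + t2)) := by
    linarith [A1, A2, B1, B2, B3, HU, HV]
  have hfinal : 4 * (u * (p + s1) + v * (q + s2) + p * q)
      ≤ c * (u^2 + p^2 + t1 + v^2 + q^2 + t2) :=
    le_of_mul_le_mul_left key (mul_pos hcpos (by linarith : (0:ℝ) < c - 2))
  linarith [hfinal, sq_nonneg (u + p + s1 + v + q + s2)]

set_option maxHeartbeats 1000000 in
lemma lower (n a b : ℕ) (hn : 6 ≤ n) (ha : a = (n+1)/2) (hb : b = n/2)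
    (x : Fin (a+b) → ℝ) :
    (5/2 - (n:ℝ)) * (x ⬝ᵥ x) ≤ x ⬝ᵥ (signedCompleteMatrix (treeTT a b)) *ᵥ x := by
  have ha3 : 3 ≤ a := by omega
  have hb3 : 3 ≤ b := by omega
  set y : ℕ → ℝ := fun k => if h : k < a + b then x ⟨k, h⟩ else 0 with hy
  have hxy : ∀ i : Fin (a+b), x i = y ↑i := by
    intro i; rw [hy]; simp only [i.isLt, dif_pos, Fin.eta]
  set u := y 0 with hu; set p := y 1 with hp; set v := y a with hv
  set q := y (a+1) with hq
  set s1 := ∑ j ∈ Ico 2 a, y j with hs1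
  set s2 := ∑ j ∈ Ico (a+2) (a+b), y j with hs2
  set t1 := ∑ j ∈ Ico 2 a, (y j)^2 with ht1
  set t2 := ∑ j ∈ Ico (a+2) (a+b), (y j)^2 with ht2
  have ht1n : 0 ≤ t1 := Finset.sum_nonneg fun j _ => sq_nonneg _
  have ht2n : 0 ≤ t2 := Finset.sum_nonneg fun j _ => sq_nonneg _
  have hmain : x ⬝ᵥ (signedCompleteMatrix (treeTT a b)) *ᵥ x
      = (u + p + s1 + v + q + s2)^2 - (u^2 + p^2 + t1 + v^2 + q^2 + t2)
        - 4 * (u * (p + s1) + v * (q + s2) + p * q) := by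
    rw [quad_form (treeTT a b) x]
    have e1 : ∑ i : Fin (a+b), x i = u + p + s1 + v + q + s2 := by
      rw [Finset.sum_congr rfl fun i (_ : i ∈ univ) => hxy i,
        Fin.sum_univ_eq_sum_range y (a+b), sum_range_split a b ha3 hb3 y]
    have e2 : ∑ i : Fin (a+b), x i ^ 2 = u^2 + p^2 + t1 + v^2 + q^2 + t2 := by
      rw [Finset.sum_congr rfl fun i (_ : i ∈ univ) => by rw [hxy i],
        Fin.sum_univ_eq_sum_range (fun k => (y k)^2) (a+b),
        sum_range_split a b ha3 hb3 (fun k => (y k)^2)]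
    have e3 : ∑ i : Fin (a+b), ∑ j : Fin (a+b),
        (if (treeTT a b).Adj i j then x i * x j else 0)
        = 2 * (u * (p + s1) + v * (q + s2) + p * q) := by
      rw [Finset.sum_congr rfl fun i (_ : i ∈ univ) => Finset.sum_congr rfl
        fun j (_ : j ∈ univ) => by rw [hxy i, hxy j],
        Qsum a b ha3 hb3 y,
        Finset.sum_eq_sum_Ico_succ_bot (by omega : 1 < a) y,
        Finset.sum_eq_sum_Ico_succ_bot (by omega : a + 1 < a + b) y]
      try rw [show (1:ℕ) + 1 = 2 by rfl]
      try rw [show a + 1 + 1 = a + 2 by rfl]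
      try ring
    rw [e1, e2, e3]; ring
  have hPx : x ⬝ᵥ x = u^2 + p^2 + t1 + v^2 + q^2 + t2 := by
    have : x ⬝ᵥ x = ∑ i : Fin (a+b), x i ^ 2 := by
      simp [dotProduct, sq]
    rw [this, Finset.sum_congr rfl fun i (_ : i ∈ univ) => by rw [hxy i],
      Fin.sum_univ_eq_sum_range (fun k => (y k)^2) (a+b),
      sum_range_split a b ha3 hb3 (fun k => (y k)^2)]
  rw [hmain, hPx]
  clear_value y u p v q s1 s2 t1 t2
  -- arithmetic from here on
  by_cases h8 : 8 ≤ n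
  · -- general case
    obtain ⟨c, hc⟩ : ∃ c : ℝ, c = (n:ℝ) - 7/2 := ⟨_, rfl⟩
    have hc92 : (9:ℝ)/2 ≤ c := by
      have : (8:ℝ) ≤ (n:ℝ) := by exact_mod_cast h8
      rw [hc]; linarith
    have hcard1 : ((Ico 2 a).card : ℝ) = (a:ℝ) - 2 := by
      rw [Nat.card_Ico]; push_cast [Nat.cast_sub (by omega : 2 ≤ a)]; ring
    have hcard2 : ((Ico (a+2) (a+b)).card : ℝ) = (b:ℝ) - 2 := by
      rw [Nat.card_Ico]
      push_cast [Nat.cast_sub (by omega : a + 2 ≤ a + b)]; ring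
    have hexp1 : 0 ≤ 4*((a:ℝ)-2)*u^2 - 4*c*(u*s1) + c^2*t1 := by
      have h0 : 0 ≤ ∑ j ∈ Ico 2 a, (2*u - c * y j)^2 :=
        Finset.sum_nonneg fun j _ => sq_nonneg _
      have hexp : ∑ j ∈ Ico 2 a, (2*u - c * y j)^2
          = 4*((a:ℝ)-2)*u^2 - 4*c*(u*s1) + c^2*t1 := by
        have : ∀ j ∈ Ico 2 a, (2*u - c * y j)^2
            = 4*u^2 - (4*c*u) * y j + c^2 * (y j)^2 := fun j _ => by ring
        rw [Finset.sum_congr rfl this]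
        rw [Finset.sum_add_distrib, Finset.sum_sub_distrib, Finset.sum_const,
          ← Finset.mul_sum, ← Finset.mul_sum, nsmul_eq_mul, hcard1, ← hs1, ← ht1]
        ring
      rw [hexp] at h0; linarith
    have hexp2 : 0 ≤ 4*((b:ℝ)-2)*v^2 - 4*c*(v*s2) + c^2*t2 := by
      have h0 : 0 ≤ ∑ j ∈ Ico (a+2) (a+b), (2*v - c * y j)^2 :=
        Finset.sum_nonneg fun j _ => sq_nonneg _
      have hexp : ∑ j ∈ Ico (a+2) (a+b), (2*v - c * y j)^2
          = 4*((b:ℝ)-2)*v^2 - 4*c*(v*s2) + c^2*t2 := by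
        have : ∀ j ∈ Ico (a+2) (a+b), (2*v - c * y j)^2
            = 4*v^2 - (4*c*v) * y j + c^2 * (y j)^2 := fun j _ => by ring
        rw [Finset.sum_congr rfl this]
        rw [Finset.sum_add_distrib, Finset.sum_sub_distrib, Finset.sum_const,
          ← Finset.mul_sum, ← Finset.mul_sum, nsmul_eq_mul, hcard2, ← hs2, ← ht2]
        ring
      rw [hexp] at h0; linarith
    have h4a : 4*((a:ℝ)-2) ≤ 2*c + 1 := by
      have h2a' : 2*a ≤ n + 1 := by omega
      have h2a : (2:ℝ)*(a:ℝ) ≤ (n:ℝ) + 1 := by exact_mod_cast h2a'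
      rw [hc]; linarith
    have h4b : 4*((b:ℝ)-2) ≤ 2*c + 1 := by
      have h2b' : 2*b ≤ n + 1 := by omega
      have h2b : (2:ℝ)*(b:ℝ) ≤ (n:ℝ) + 1 := by exact_mod_cast h2b'
      rw [hc]; linarith
    have harith := lower_arith c ((a:ℝ)) ((b:ℝ)) u p v q s1 s2 t1 t2 hc92 h4a h4b
      ht1n ht2n hexp1 hexp2
    have hceq : (5/2 - (n:ℝ)) = -1 - c := by rw [hc]; ring
    rw [hceq]
    exact harith
  · -- n = 6 or n = 7
    have h67 : n = 6 ∨ n = 7 := by omega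
    rcases h67 with rfl | rfl
    · obtain rfl : a = 3 := by omega
      obtain rfl : b = 3 := by omega
      have e1 : s1 = y 2 := by
        rw [hs1, show Ico 2 3 = {2} from rfl, Finset.sum_singleton]
      have e2 : s2 = y 5 := by
        rw [hs2, show Ico 5 6 = {5} from rfl, Finset.sum_singleton]
      have e3 : t1 = (y 2)^2 := by
        rw [ht1, show Ico 2 3 = {2} from rfl, Finset.sum_singleton]
      have e4 : t2 = (y 5)^2 := by
        rw [ht2, show Ico 5 6 = {5} from rfl, Finset.sum_singleton]
      rw [e1, e2, e3, e4]
      have hn6 : ((6:ℕ):ℝ) = 6 := by norm_num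
      rw [hn6]
      linarith [sq_nonneg (7*u - 2*p - 2*(y 2) + 2*v + 2*q + 2*(y 5)),
        sq_nonneg (45*p + 10*(y 2) + 18*v - 10*q + 18*(y 5)),
        sq_nonneg (55*(y 2) + 18*v + 26*q + 18*(y 5)),
        sq_nonneg (29*v - 18*q - 26*(y 5)),
        sq_nonneg (423*q - 230*(y 5)),
        sq_nonneg (y 5)]
    · obtain rfl : a = 4 := by omega
      obtain rfl : b = 3 := by omega
      have e1 : s1 = y 2 + y 3 := by
        rw [hs1, show Ico 2 4 = {2, 3} from by decide,
          Finset.sum_pair (by norm_num : (2:ℕ) ≠ 3)]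
      have e2 : s2 = y 6 := by
        rw [hs2, show Ico 6 7 = {6} from rfl, Finset.sum_singleton]
      have e3 : t1 = (y 2)^2 + (y 3)^2 := by
        rw [ht1, show Ico 2 4 = {2, 3} from by decide,
          Finset.sum_pair (by norm_num : (2:ℕ) ≠ 3)]
      have e4 : t2 = (y 6)^2 := by
        rw [ht2, show Ico 6 7 = {6} from rfl, Finset.sum_singleton]
      rw [e1, e2, e3, e4]
      have hn7 : ((7:ℕ):ℝ) = 7 := by norm_num
      rw [hn7]
      linarith [sq_nonneg (9*u - 2*p - 2*(y 2) - 2*(y 3) + 2*v + 2*q + 2*(y 6)),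
        sq_nonneg (77*p + 14*(y 2) + 14*(y 3) + 22*v - 14*q + 22*(y 6)),
        sq_nonneg (91*(y 2) + 14*(y 3) + 22*v + 30*q + 22*(y 6)),
        sq_nonneg (105*(y 3) + 22*v + 30*q + 22*(y 6)),
        sq_nonneg (67*v - 30*q - 38*(y 6)),
        sq_nonneg (2489*q - 434*(y 6)),
        sq_nonneg (y 6)]


open Finset Matrix in
lemma rayleigh_min {m : ℕ} (hm : 0 < m) (M : Matrix (Fin m) (Fin m) ℝ)
    (hM : M.IsHermitian) :
    ∃ μ : ℝ, (∃ v : Fin m → ℝ, v ≠ 0 ∧ M.mulVec v = μ • v) ∧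
      ∀ x : Fin m → ℝ, μ * (x ⬝ᵥ x) ≤ x ⬝ᵥ M *ᵥ x := by
  haveI : Nonempty (Fin m) := ⟨⟨0, hm⟩⟩
  obtain ⟨i0, -, hi0⟩ := Finset.exists_min_image Finset.univ hM.eigenvalues univ_nonempty
  refine ⟨hM.eigenvalues i0, ⟨hM.eigenvectorBasis i0, ?_, hM.mulVec_eigenvectorBasis i0⟩, ?_⟩
  · intro h
    have h1 : hM.eigenvectorBasis i0 = 0 := by
      ext k; exact congrFun h k
    exact hM.eigenvectorBasis.orthonormal.ne_zero i0 h1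
  · intro x
    set U : Matrix (Fin m) (Fin m) ℝ := (hM.eigenvectorUnitary : Matrix (Fin m) (Fin m) ℝ) with hU
    have hU2 : U * star U = 1 := (Matrix.mem_unitaryGroup_iff).mp (hM.eigenvectorUnitary).2
    have hstarU : star U = Uᵀ := by
      rw [Matrix.star_eq_conjTranspose, Matrix.conjTranspose_eq_transpose_of_trivial]
    set y : Fin m → ℝ := star U *ᵥ x with hy
    have hxMx : x ⬝ᵥ M *ᵥ x = ∑ i, hM.eigenvalues i * (y i)^2 := by
      conv_lhs => rw [hM.spectral_theorem, Unitary.conjStarAlgAut_apply]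
      rw [← Matrix.mulVec_mulVec, ← Matrix.mulVec_mulVec, Matrix.dotProduct_mulVec]
      have hxU : x ᵥ* U = y := by rw [hy, hstarU, Matrix.mulVec_transpose]
      rw [hxU]
      simp [Matrix.mulVec_diagonal, dotProduct]
      refine Finset.sum_congr rfl fun i _ => by ring
    have hxx : x ⬝ᵥ x = ∑ i, (y i)^2 := by
      have : y ⬝ᵥ y = x ⬝ᵥ x := by
        rw [dotProduct_comm, hy, Matrix.dotProduct_mulVec, hstarU,
          Matrix.vecMul_transpose, Matrix.mulVec_mulVec, ← hstarU, hU2, Matrix.one_mulVec]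
      rw [← this]
      simp [dotProduct, sq]
    rw [hxMx, hxx, Finset.mul_sum]
    exact Finset.sum_le_sum fun i _ => mul_le_mul_of_nonneg_right (hi0 i (Finset.mem_univ i)) (sq_nonneg _)


lemma sum_Ico_const_val {lo hi : ℕ} (g : ℕ → ℝ) (c : ℝ)
    (h : ∀ j, lo ≤ j → j < hi → g j = c) (hle : lo ≤ hi) :
    ∑ j ∈ Ico lo hi, g j = ((hi : ℝ) - (lo : ℝ)) * c := by
  rw [Finset.sum_congr rfl (fun j hj => h j (Finset.mem_Ico.1 hj).1 (Finset.mem_Ico.1 hj).2),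
    Finset.sum_const, Nat.card_Ico, nsmul_eq_mul, Nat.cast_sub hle]


end AuxiliaryLemmas

open scoped Classical
open Finset Matrix

/-- For `n ≥ 6`, with `a = ⌈n/2⌉` and `b = ⌊n/2⌋`, the least eigenvalue of
`A((K_n, 𝒯⁻_{a-1,b-1}))` satisfies `λₙ > 2 - n`, and moreover `λₙ < -4` when `n ≥ 8`. -/
theorem stmt9 (n : ℕ) (hn : 6 ≤ n) (a b : ℕ) (ha : a = (n + 1) / 2) (hb : b = n / 2) :
    2 - (n : ℝ) < lambdaMin (signedCompleteMatrix (treeTT a b)) ∧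
    (8 ≤ n → lambdaMin (signedCompleteMatrix (treeTT a b)) < -4) := by
  have ha3 : 3 ≤ a := by omega
  have hb3 : 3 ≤ b := by omega
  have hab : a + b = n := by omega
  set M := signedCompleteMatrix (treeTT a b) with hM
  have hMherm : M.IsHermitian := by
    unfold Matrix.IsHermitian
    ext i j
    rw [Matrix.conjTranspose_apply, star_trivial, hM]
    unfold signedCompleteMatrix
    by_cases hij : i = j
    · subst hij; rfl
    · rw [if_neg (fun h => hij h.symm), if_neg hij]
      exact if_congr ((treeTT a b).adj_comm j i) rfl rfl
  set S := {μ : ℝ | ∃ x : Fin (a+b) → ℝ, x ≠ 0 ∧ M.mulVec x = μ • x} with hS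
  have hlamS : lambdaMin M = sInf S := rfl
  have hnR : (6:ℝ) ≤ (n:ℝ) := by exact_mod_cast hn
  have hlowS : ∀ μ ∈ S, 5/2 - (n:ℝ) ≤ μ := by
    rintro μ ⟨x, hx0, hxeq⟩
    have h1 := lower n a b hn ha hb x
    have h2 : x ⬝ᵥ M *ᵥ x = μ * (x ⬝ᵥ x) := by
      show x ⬝ᵥ M.mulVec x = _
      rw [hxeq, dotProduct_smul, smul_eq_mul]
    have hxxnn : 0 ≤ x ⬝ᵥ x := Finset.sum_nonneg fun i _ => mul_self_nonneg (x i)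
    have hxxpos : 0 < x ⬝ᵥ x :=
      lt_of_le_of_ne hxxnn (fun h => hx0 (dotProduct_self_eq_zero.1 h.symm))
    rw [← hM] at h1
    rw [h2] at h1
    exact le_of_mul_le_mul_right h1 hxxpos
  obtain ⟨μ0, hmem0, hray⟩ := rayleigh_min (by omega : 0 < a + b) M hMherm
  have hmem0S : μ0 ∈ S := hmem0
  have hBdd : BddBelow S := ⟨5/2 - (n:ℝ), fun μ hμ => hlowS μ hμ⟩
  constructor
  · rw [hlamS]
    have h1 : (5/2 - (n:ℝ)) ≤ sInf S := le_csInf ⟨μ0, hmem0S⟩ hlowS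
    linarith
  · intro h8
    have h8R : (8:ℝ) ≤ (n:ℝ) := by exact_mod_cast h8
    -- test vector
    set g : ℕ → ℝ := fun k => if k = 0 then 2 else if k < a then 1
      else if k = a then -2 else -1 with hg
    set x : Fin (a+b) → ℝ := fun i => g ↑i with hx
    have hg0 : g 0 = 2 := by simp [hg]
    have hg1 : g 1 = 1 := by
      simp only [hg]
      rw [if_neg (by omega : ¬ (1:ℕ) = 0), if_pos (by omega : 1 < a)]
    have hga : g a = -2 := by
      simp only [hg]
      rw [if_neg (by omega : ¬ a = 0), if_neg (by omega : ¬ a < a)]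
      simp
    have hga1 : g (a+1) = -1 := by
      simp only [hg]
      rw [if_neg (by omega : ¬ a + 1 = 0), if_neg (by omega : ¬ a + 1 < a),
        if_neg (by omega : ¬ a + 1 = a)]
    have hI2a : ∑ j ∈ Ico 2 a, g j = ((a:ℝ) - 2) * 1 := by
      refine sum_Ico_const_val (lo := 2) (hi := a) (g := g) (c := 1) (fun j hj1 hj2 => ?_) (by omega)
      simp only [hg]
      rw [if_neg (by omega : ¬ j = 0), if_pos hj2]
    have hIa2 : ∑ j ∈ Ico (a+2) (a+b), g j = ((a:ℝ) + (b:ℝ) - ((a:ℝ)+2)) * (-1) := by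
      have : ((a+b:ℕ):ℝ) - ((a+2:ℕ):ℝ) = (a:ℝ) + (b:ℝ) - ((a:ℝ)+2) := by push_cast; ring
      rw [← this]
      refine sum_Ico_const_val (lo := a+2) (hi := a+b) (g := g) (c := -1)
        (fun j hj1 hj2 => ?_) (by omega)
      simp only [hg]
      rw [if_neg (by omega : ¬ j = 0), if_neg (by omega : ¬ j < a),
        if_neg (by omega : ¬ j = a)]
    have hI1a : ∑ j ∈ Ico 1 a, g j = ((a:ℝ) - 1) * 1 := by
      have h' : ∑ j ∈ Ico 1 a, g j = ((a:ℝ) - ((1:ℕ):ℝ)) * 1 := by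
        refine sum_Ico_const_val (lo := 1) (hi := a) (g := g) (c := 1)
          (fun j hj1 hj2 => ?_) (by omega)
        simp only [hg]
        rw [if_neg (by omega : ¬ j = 0), if_pos hj2]
      rw [h']; norm_num
    have hIa1 : ∑ j ∈ Ico (a+1) (a+b), g j = ((a:ℝ) + (b:ℝ) - ((a:ℝ)+1)) * (-1) := by
      have : ((a+b:ℕ):ℝ) - ((a+1:ℕ):ℝ) = (a:ℝ) + (b:ℝ) - ((a:ℝ)+1) := by push_cast; ring
      rw [← this]
      refine sum_Ico_const_val (lo := a+1) (hi := a+b) (g := g) (c := -1)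
        (fun j hj1 hj2 => ?_) (by omega)
      simp only [hg]
      rw [if_neg (by omega : ¬ j = 0), if_neg (by omega : ¬ j < a),
        if_neg (by omega : ¬ j = a)]
    have hI2asq : ∑ j ∈ Ico 2 a, (g j)^2 = ((a:ℝ) - 2) * 1 := by
      refine sum_Ico_const_val (lo := 2) (hi := a) (g := fun j => (g j)^2) (c := 1)
        (fun j hj1 hj2 => ?_) (by omega)
      have hgj : g j = 1 := by
        simp only [hg]
        rw [if_neg (by omega : ¬ j = 0), if_pos hj2]
      show (g j)^2 = 1
      rw [hgj]; norm_num
    have hIa2sq : ∑ j ∈ Ico (a+2) (a+b), (g j)^2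
        = ((a:ℝ) + (b:ℝ) - ((a:ℝ)+2)) * 1 := by
      have h' : ((a+b:ℕ):ℝ) - ((a+2:ℕ):ℝ) = (a:ℝ) + (b:ℝ) - ((a:ℝ)+2) := by
        push_cast; ring
      rw [← h']
      refine sum_Ico_const_val (lo := a+2) (hi := a+b) (g := fun j => (g j)^2) (c := 1)
        (fun j hj1 hj2 => ?_) (by omega)
      have hgj : g j = -1 := by
        simp only [hg]
        rw [if_neg (by omega : ¬ j = 0), if_neg (by omega : ¬ j < a),
          if_neg (by omega : ¬ j = a)]
      show (g j)^2 = 1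
      rw [hgj]; norm_num
    have habR : (a:ℝ) + (b:ℝ) = (n:ℝ) := by exact_mod_cast hab
    have hSx : ∑ i : Fin (a+b), x i = (a:ℝ) - (b:ℝ) := by
      rw [hx]
      show ∑ i : Fin (a+b), g ↑i = _
      rw [Fin.sum_univ_eq_sum_range g (a+b), sum_range_split a b ha3 hb3 g,
        hg0, hg1, hga, hga1, hI2a, hIa2]
      ring
    have hPx : ∑ i : Fin (a+b), x i ^ 2 = (n:ℝ) + 6 := by
      rw [hx]
      show ∑ i : Fin (a+b), (g ↑i)^2 = _
      rw [Fin.sum_univ_eq_sum_range (fun k => (g k)^2) (a+b),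
        sum_range_split a b ha3 hb3 (fun k => (g k)^2),
        hg0, hg1, hga, hga1, hI2asq, hIa2sq]
      push_cast
      rw [← habR]; ring
    have hQx : ∑ i : Fin (a+b), ∑ j : Fin (a+b),
        (if (treeTT a b).Adj i j then x i * x j else 0)
        = 2 * (2*((a:ℝ)-1) + 2*((b:ℝ)-1) - 1) := by
      rw [hx]
      show ∑ i : Fin (a+b), ∑ j : Fin (a+b),
        (if (treeTT a b).Adj i j then g ↑i * g ↑j else 0) = _
      rw [Qsum a b ha3 hb3 g, hg0, hg1, hga, hga1, hI1a, hIa1]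
      ring
    have hxx : x ⬝ᵥ x = (n:ℝ) + 6 := by
      have : x ⬝ᵥ x = ∑ i : Fin (a+b), x i ^ 2 := by
        simp [dotProduct, sq]
      rw [this, hPx]
    have habdiff : 0 ≤ (a:ℝ) - (b:ℝ) ∧ (a:ℝ) - (b:ℝ) ≤ 1 := by
      constructor
      · have : b ≤ a := by omega
        have := (Nat.cast_le (α := ℝ)).2 this
        linarith
      · have : a ≤ b + 1 := by omega
        have := (Nat.cast_le (α := ℝ)).2 this
        push_cast at this
        linarith
    have hxMx : x ⬝ᵥ M *ᵥ x ≤ 15 - 9*(n:ℝ) := by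
      rw [hM, quad_form (treeTT a b) x, hSx, hPx, hQx]
      have h1 : ((a:ℝ) - (b:ℝ))^2 ≤ 1 := by nlinarith [habdiff.1, habdiff.2]
      have : 2*((a:ℝ)-1) + 2*((b:ℝ)-1) - 1 = 2*(n:ℝ) - 5 := by rw [← habR]; ring
      rw [this]
      nlinarith [h1]
    have hmu0 : μ0 < -4 := by
      have hr := hray x
      rw [hxx] at hr
      have h1 : μ0 * ((n:ℝ)+6) ≤ 15 - 9*(n:ℝ) := le_trans hr hxMx
      by_contra hcon
      push_neg at hcon
      have h2 : (-4) * ((n:ℝ)+6) ≤ μ0 * ((n:ℝ)+6) :=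
        mul_le_mul_of_nonneg_right hcon (by linarith)
      linarith
    rw [hlamS]
    exact lt_of_le_of_lt (csInf_le hBdd hmem0S) hmu0
end

section
/- Let n ≥ 4 and let Σ = (K_n, T^-_{1,n-3}) be the signed complete graph whose negative edges form the spanning double star T_{1,n-3}. Then the characteristic polynomial of A(Σ) equals (λ+1)^{n−3} · (λ³ + (3−n)λ² + (3−2n)λ + 7n − 23). -/
theorem myDetFinFour {R : Type*} [CommRing R] (A : Matrix (Fin 4) (Fin 4) R) :
    A.det =
      A 0 0 * (A 1 1 * (A 2 2 * A 3 3 - A 2 3 * A 3 2) - A 1 2 * (A 2 1 * A 3 3 - A 2 3 * A 3 1)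
        + A 1 3 * (A 2 1 * A 3 2 - A 2 2 * A 3 1))
      - A 0 1 * (A 1 0 * (A 2 2 * A 3 3 - A 2 3 * A 3 2) - A 1 2 * (A 2 0 * A 3 3 - A 2 3 * A 3 0)
        + A 1 3 * (A 2 0 * A 3 2 - A 2 2 * A 3 0))
      + A 0 2 * (A 1 0 * (A 2 1 * A 3 3 - A 2 3 * A 3 1) - A 1 1 * (A 2 0 * A 3 3 - A 2 3 * A 3 0)
        + A 1 3 * (A 2 0 * A 3 1 - A 2 1 * A 3 0))
      - A 0 3 * (A 1 0 * (A 2 1 * A 3 2 - A 2 2 * A 3 1) - A 1 1 * (A 2 0 * A 3 2 - A 2 2 * A 3 0)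
        + A 1 2 * (A 2 0 * A 3 1 - A 2 1 * A 3 0)) := by
  rw [Matrix.det_succ_row_zero, Fin.sum_univ_four]
  simp only [Matrix.det_fin_three, Matrix.submatrix_apply,
    show Fin.succ (0 : Fin 3) = 1 by decide, show Fin.succ (1 : Fin 3) = 2 by decide,
    show Fin.succ (2 : Fin 3) = 3 by decide,
    show (0 : Fin 4).succAbove 0 = 1 by decide, show (0 : Fin 4).succAbove 1 = 2 by decide,
    show (0 : Fin 4).succAbove 2 = 3 by decide,
    show (1 : Fin 4).succAbove 0 = 0 by decide, show (1 : Fin 4).succAbove 1 = 2 by decide,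
    show (1 : Fin 4).succAbove 2 = 3 by decide,
    show (2 : Fin 4).succAbove 0 = 0 by decide, show (2 : Fin 4).succAbove 1 = 1 by decide,
    show (2 : Fin 4).succAbove 2 = 3 by decide,
    show (3 : Fin 4).succAbove 0 = 0 by decide, show (3 : Fin 4).succAbove 1 = 1 by decide,
    show (3 : Fin 4).succAbove 2 = 2 by decide,
    show ((0 : Fin 4) : ℕ) = 0 by decide, show ((1 : Fin 4) : ℕ) = 1 by decide,
    show ((2 : Fin 4) : ℕ) = 2 by decide, show ((3 : Fin 4) : ℕ) = 3 by decide]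
  ring

noncomputable def sU (m : ℕ) : Matrix (Fin (1 + m + 2)) (Fin 4) ℝ :=
  fun i k =>
    if (i : ℕ) = 0 then (if (k : ℕ) = 0 then -1 else if (k : ℕ) = 1 then 0 else 2)
    else if (i : ℕ) = 1 then (if (k : ℕ) = 0 then 1 else if (k : ℕ) = 1 then 0 else -2)
    else if (i : ℕ) = 2 then (if (k : ℕ) = 0 then -1 else if (k : ℕ) = 1 then 2 else 0)
    else (if (k : ℕ) = 0 then -1 else if (k : ℕ) = 2 then 2 else 0)

noncomputable def sV (m : ℕ) : Matrix (Fin 4) (Fin (1 + m + 2)) ℝ :=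
  fun k j => if (k : ℕ) = 0 then 1 else if (j : ℕ) = (k : ℕ) - 1 then 1 else 0

lemma sum_ite_vals (m : ℕ) (a b c d : ℝ) :
    ∑ i : Fin (1 + m + 2),
      (if (i : ℕ) = 0 then a else if (i : ℕ) = 1 then b else if (i : ℕ) = 2 then c else d)
      = a + b + c + (m : ℝ) * d := by
  rw [Fin.sum_univ_eq_sum_range (fun v => if v = 0 then a else if v = 1 then b
    else if v = 2 then c else d)]
  induction m with
  | zero => norm_num [Finset.sum_range_succ]
  | succ k ih =>
    rw [show 1 + (k + 1) + 2 = (1 + k + 2) + 1 by omega, Finset.sum_range_succ, ih]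
    rw [if_neg (by omega), if_neg (by omega), if_neg (by omega)]
    push_cast; ring

lemma sum_chain (m : ℕ) (hm : 1 ≤ m) (f : Fin (1 + m + 2) → ℝ)
    (h3 : ∀ x : Fin (1 + m + 2), 3 ≤ (x : ℕ) →
      f x = f ⟨3, by omega⟩) :
    ∑ x, f x = f ⟨0, by omega⟩ + f ⟨1, by omega⟩ + f ⟨2, by omega⟩
      + (m : ℝ) * f ⟨3, by omega⟩ := by
  rw [← sum_ite_vals m (f ⟨0, by omega⟩) (f ⟨1, by omega⟩) (f ⟨2, by omega⟩) (f ⟨3, by omega⟩)]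
  refine Finset.sum_congr rfl fun x _ => ?_
  rcases h : (x : ℕ) with _ | _ | _ | v
  · rw [if_pos rfl]; congr 1; exact Fin.ext h
  · rw [if_neg (by omega), if_pos (by omega)]; congr 1; exact Fin.ext h
  · rw [if_neg (by omega), if_neg (by omega), if_pos (by omega)]; congr 1; exact Fin.ext h
  · rw [if_neg (by omega), if_neg (by omega), if_neg (by omega)]
    exact h3 x (by omega)

lemma VU_eq (m : ℕ) (hm : 1 ≤ m) :
    sV m * sU m = !![-1 - (m : ℝ), 2, 2 * (m : ℝ), 0; -1, 0, 2, 2; 1, 0, -2, -2; -1, 2, 0, 0] := by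
  ext k l
  rw [Matrix.mul_apply, sum_chain m hm (fun x => sV m k x * sU m x l) (fun x hx => by
    have hk := k.isLt
    have e1 : sU m x l = sU m ⟨3, by omega⟩ l := by
      simp only [sU, Fin.val_mk]
      rw [if_neg (by omega : ¬(x : ℕ) = 0), if_neg (by omega : ¬(x : ℕ) = 1),
        if_neg (by omega : ¬(x : ℕ) = 2)]
      norm_num
    have e2 : sV m k x = sV m k ⟨3, by omega⟩ := by
      simp only [sV, Fin.val_mk]
      by_cases hk0 : (k : ℕ) = 0
      · rw [if_pos hk0, if_pos hk0]
      · rw [if_neg hk0, if_neg hk0, if_neg (by omega), if_neg (by omega)]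
    exact congrArg₂ (· * ·) e2 e1)]
  fin_cases k <;> fin_cases l <;>
    · simp only [sU, sV, Fin.val_mk]
      norm_num
      try ring

open Polynomial in
lemma charmap_eq (m : ℕ) (t : ℝ) :
    (Matrix.charmatrix (signedCompleteMatrix (doubleStar 1 m))).map (eval t)
      = (t + 1) • (1 : Matrix (Fin (1 + m + 2)) (Fin (1 + m + 2)) ℝ) + sU m * sV m := by
  ext i j
  have hval : signedCompleteMatrix (doubleStar 1 m) i j =
      if (i : ℕ) = (j : ℕ) then 0
      else if ((i : ℕ) = 0 ∧ (j : ℕ) = 1) ∨ ((i : ℕ) = 0 ∧ 2 ≤ (j : ℕ) ∧ (j : ℕ) < 1 + 2) ∨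
        ((i : ℕ) = 1 ∧ 1 + 2 ≤ (j : ℕ)) ∨ ((j : ℕ) = 0 ∧ (i : ℕ) = 1) ∨
        ((j : ℕ) = 0 ∧ 2 ≤ (i : ℕ) ∧ (i : ℕ) < 1 + 2) ∨ ((j : ℕ) = 1 ∧ 1 + 2 ≤ (i : ℕ))
      then -1 else 1 := by
    simp only [signedCompleteMatrix, doubleStar, SimpleGraph.fromRel_adj, ne_eq, Fin.ext_iff]
    split_ifs <;> first | rfl | omega
  have hmul : (sU m * sV m) i j = sU m i 0 * 1 + sU m i 1 * (if (j : ℕ) = 0 then 1 else 0)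
      + sU m i 2 * (if (j : ℕ) = 1 then 1 else 0)
      + sU m i 3 * (if (j : ℕ) = 2 then 1 else 0) := by
    rw [Matrix.mul_apply, Fin.sum_univ_four]
    norm_num [sV, show ((0 : Fin 4) : ℕ) = 0 from rfl, show ((1 : Fin 4) : ℕ) = 1 from rfl,
      show ((2 : Fin 4) : ℕ) = 2 from rfl, show ((3 : Fin 4) : ℕ) = 3 from rfl]
  by_cases hij : i = j
  · subst hij
    rw [Matrix.map_apply, Matrix.charmatrix_apply_eq, hval]
    simp only [Matrix.add_apply, Matrix.smul_apply, Matrix.one_apply_eq, smul_eq_mul, mul_one,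
      hmul, eval_sub, eval_X, eval_C, if_pos rfl, sU,
      show ((0 : Fin 4) : ℕ) = 0 from rfl, show ((1 : Fin 4) : ℕ) = 1 from rfl,
      show ((2 : Fin 4) : ℕ) = 2 from rfl, show ((3 : Fin 4) : ℕ) = 3 from rfl]
    norm_num
    split_ifs <;> first | omega | (simp only [Fin.ext_iff, Fin.val_zero] at *; omega) | norm_num | simp_all
  · rw [Matrix.map_apply, Matrix.charmatrix_apply_ne _ _ _ hij, hval]
    have hne : ¬ (i : ℕ) = (j : ℕ) := fun h => hij (Fin.ext h)
    simp only [Matrix.add_apply, Matrix.smul_apply, Matrix.one_apply_ne hij, smul_eq_mul,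
      mul_zero, zero_add, hmul, eval_neg, eval_C, if_neg hne, sU,
      show ((0 : Fin 4) : ℕ) = 0 from rfl, show ((1 : Fin 4) : ℕ) = 1 from rfl,
      show ((2 : Fin 4) : ℕ) = 2 from rfl, show ((3 : Fin 4) : ℕ) = 3 from rfl]
    norm_num
    split_ifs <;> first | omega | (simp only [Fin.ext_iff, Fin.val_zero] at *; omega) | norm_num | simp_all

open Polynomial in
lemma key (m : ℕ) (hm : 1 ≤ m) :
    Matrix.charpoly (signedCompleteMatrix (doubleStar 1 m)) =
      (X + 1) ^ m * (X ^ 3 + C (3 - ((m : ℝ) + 3)) * X ^ 2 + C (3 - 2 * ((m : ℝ) + 3)) * X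
        + C (7 * ((m : ℝ) + 3) - 23)) := by
  apply Polynomial.eq_of_infinite_eval_eq
  have hinf : ({(-1 : ℝ)}ᶜ : Set ℝ).Infinite := (Set.finite_singleton _).infinite_compl
  refine hinf.mono fun t ht => ?_
  simp only [Set.mem_compl_iff, Set.mem_singleton_iff] at ht
  show eval t _ = eval t _
  have hc : t + 1 ≠ 0 := fun h => ht (by linarith)
  have hdet : eval t (Matrix.charpoly (signedCompleteMatrix (doubleStar 1 m)))
      = ((Matrix.charmatrix (signedCompleteMatrix (doubleStar 1 m))).map (eval t)).det := by
    rw [Matrix.charpoly]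
    simpa only [RingHom.mapMatrix_apply, Polynomial.coe_evalRingHom] using
      RingHom.map_det (evalRingHom t) (Matrix.charmatrix (signedCompleteMatrix (doubleStar 1 m)))
  rw [hdet, charmap_eq m t]
  have hfac : (t + 1) • (1 : Matrix (Fin (1 + m + 2)) (Fin (1 + m + 2)) ℝ) + sU m * sV m
      = (t + 1) • (1 + ((t + 1)⁻¹ • sU m) * sV m) := by
    rw [Matrix.smul_mul, smul_add, smul_smul, mul_inv_cancel₀ hc, one_smul]
  rw [hfac, Matrix.det_smul, Matrix.det_one_add_mul_comm, Matrix.mul_smul, VU_eq m hm,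
    Fintype.card_fin, myDetFinFour]
  simp only [Matrix.add_apply, Matrix.smul_apply, Matrix.one_apply, smul_eq_mul]
  simp only [Matrix.of_apply, Matrix.cons_val]
  norm_num [Matrix.cons_val_zero, Matrix.cons_val_one, Matrix.head_cons, Fin.ext_iff,
    show ((0 : Fin 4) : ℕ) = 0 from rfl, show ((1 : Fin 4) : ℕ) = 1 from rfl,
    show ((2 : Fin 4) : ℕ) = 2 from rfl, show ((3 : Fin 4) : ℕ) = 3 from rfl]
  rw [show 1 + m + 2 = m + 3 by omega, pow_add, mul_assoc]
  try simp only [eval_mul, eval_pow, eval_add, eval_X, eval_one, eval_C]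
  congr 1
  field_simp
  ring

open Polynomial in
/-- For `n ≥ 4`, the characteristic polynomial of `A((K_n, T⁻_{1,n-3}))`
equals `(λ+1)^(n-3) (λ³ + (3-n)λ² + (3-2n)λ + 7n - 23)`. -/
theorem stmt10 (n : ℕ) (hn : 4 ≤ n) :
    Matrix.charpoly (signedCompleteMatrix (doubleStar 1 (n - 3))) =
      (X + 1) ^ (n - 3) *
        (X ^ 3 + C (3 - (n : ℝ)) * X ^ 2 + C (3 - 2 * (n : ℝ)) * X + C (7 * (n : ℝ) - 23)) := by
  obtain ⟨m, rfl⟩ : ∃ m, n = m + 3 := ⟨n - 3, by omega⟩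
  have hm : 1 ≤ m := by omega
  simp only [Nat.add_sub_cancel]
  exact (key m hm).trans (by push_cast; ring)
end

section
/- Let n ≥ 6 and let Σ = (K_n, T^-_{1,n-3}) be the signed complete graph whose negative edges form the spanning double star T_{1,n-3}. Then λ_1(A(Σ)) > n − 2. -/
section Aux

open scoped Classical

set_option linter.unreachableTactic false
set_option linter.unnecessarySeqFocus false
set_option linter.unusedTactic false

open Matrix

/-- 4-case step function on ℕ. -/
noncomputable def val4 (p q r l : ℝ) (k : ℕ) : ℝ :=
  if k = 0 then p else if k = 1 then q else if k = 2 then r else l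

lemma sum_val4 (N : ℕ) (hN : 3 ≤ N) (p q r l : ℝ) :
    ∑ k ∈ Finset.range N, val4 p q r l k = p + q + r + ((N : ℝ) - 3) * l := by
  induction N, hN using Nat.le_induction with
  | base => simp [Finset.sum_range_succ, val4]
  | succ N hN ih =>
      rw [Finset.sum_range_succ, ih]
      have h1 : val4 p q r l N = l := by
        unfold val4; split_ifs <;> first | rfl | omega
      rw [h1]; push_cast; ring

lemma ds_adj (m : ℕ) (i j : Fin (1 + m + 2)) :
    (doubleStar 1 m).Adj i j ↔ ((i:ℕ) ≠ (j:ℕ) ∧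
      (((i:ℕ)=0 ∧ (j:ℕ)=1) ∨ ((i:ℕ)=0 ∧ (j:ℕ)=2) ∨ ((i:ℕ)=1 ∧ 3 ≤ (j:ℕ)) ∨
       ((j:ℕ)=0 ∧ (i:ℕ)=1) ∨ ((j:ℕ)=0 ∧ (i:ℕ)=2) ∨ ((j:ℕ)=1 ∧ 3 ≤ (i:ℕ)))) := by
  rw [doubleStar, SimpleGraph.fromRel_adj, ne_eq, Fin.ext_iff, ← ne_eq]
  omega

lemma fin_sum_val4 (m : ℕ) (p q r l : ℝ) :
    ∑ j : Fin (1 + m + 2), val4 p q r l (j:ℕ) = p + q + r + (m:ℝ) * l := by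
  rw [Fin.sum_univ_eq_sum_range (fun k => val4 p q r l k) (1 + m + 2),
    sum_val4 _ (by omega)]
  push_cast; ring

lemma rowsum (m : ℕ) (P Q R L : ℝ) (i : Fin (1 + m + 2)) :
    ∑ j : Fin (1 + m + 2),
        (if (doubleStar 1 m).Adj i j then val4 P Q R L (j:ℕ) else 0)
      = val4 (Q + R) (P + (m:ℝ) * L) P Q (i:ℕ) := by
  have key : ∀ p q r l : ℝ,
      (∀ j : Fin (1 + m + 2),
        (if (doubleStar 1 m).Adj i j then val4 P Q R L (j:ℕ) else 0) = val4 p q r l (j:ℕ)) →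
      ∑ j : Fin (1 + m + 2),
        (if (doubleStar 1 m).Adj i j then val4 P Q R L (j:ℕ) else 0) = p + q + r + (m:ℝ) * l := by
    intro p q r l h
    rw [Finset.sum_congr rfl (fun j _ => h j), fin_sum_val4]
  by_cases hi0 : (i:ℕ) = 0
  · rw [key 0 Q R 0 ?_, val4, if_pos hi0]
    · ring
    · intro j; rw [ds_adj]; unfold val4; split_ifs <;> first | rfl | omega
  · by_cases hi1 : (i:ℕ) = 1
    · rw [key P 0 0 L ?_]
      · unfold val4; split_ifs <;> first | ring | omega
      · intro j; rw [ds_adj]; unfold val4; split_ifs <;> first | rfl | omega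
    · by_cases hi2 : (i:ℕ) = 2
      · rw [key P 0 0 0 ?_]
        · unfold val4; split_ifs <;> first | ring | omega
        · intro j; rw [ds_adj]; unfold val4; split_ifs <;> first | rfl | omega
      · rw [key 0 Q 0 0 ?_]
        · unfold val4; split_ifs <;> first | ring | omega
        · intro j; rw [ds_adj]; unfold val4; split_ifs <;> first | rfl | omega

lemma scm_herm {k : ℕ} (T : SimpleGraph (Fin k)) : (signedCompleteMatrix T).IsHermitian := by
  ext i j
  simp only [signedCompleteMatrix, Matrix.conjTranspose_apply, star_trivial]
  rw [T.adj_comm]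
  by_cases h : i = j
  · simp [h]
  · simp [h, Ne.symm h]

lemma scm_entry_mul {k : ℕ} (T : SimpleGraph (Fin k)) (i j : Fin k) (v : ℝ) :
    signedCompleteMatrix T i j * v =
      v - (if i = j then v else 0) - 2 * (if T.Adj i j then v else 0) := by
  unfold signedCompleteMatrix
  by_cases h : i = j
  · simp [h]
  · by_cases ha : T.Adj i j <;> simp [h, ha] <;> ring

lemma scm_qf (m : ℕ) (P Q R L : ℝ) :
    (fun j : Fin (1 + m + 2) => val4 P Q R L (j:ℕ)) ⬝ᵥ
      (signedCompleteMatrix (doubleStar 1 m) *ᵥ fun j : Fin (1 + m + 2) => val4 P Q R L (j:ℕ))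
    = P * ((P + Q + R + (m:ℝ) * L) - P - 2 * (Q + R))
      + Q * ((P + Q + R + (m:ℝ) * L) - Q - 2 * (P + (m:ℝ) * L))
      + R * ((P + Q + R + (m:ℝ) * L) - R - 2 * P)
      + (m:ℝ) * (L * ((P + Q + R + (m:ℝ) * L) - L - 2 * Q)) := by
  have hv : ∀ i : Fin (1 + m + 2),
      (signedCompleteMatrix (doubleStar 1 m) *ᵥ fun j : Fin (1 + m + 2) => val4 P Q R L (j:ℕ)) i
      = (P + Q + R + (m:ℝ) * L) - val4 P Q R L (i:ℕ)
        - 2 * val4 (Q + R) (P + (m:ℝ) * L) P Q (i:ℕ) := by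
    intro i
    show (∑ j : Fin (1 + m + 2), signedCompleteMatrix (doubleStar 1 m) i j * val4 P Q R L (j:ℕ)) = _
    rw [Finset.sum_congr rfl (fun j _ => scm_entry_mul (doubleStar 1 m) i j (val4 P Q R L (j:ℕ)))]
    rw [Finset.sum_sub_distrib, Finset.sum_sub_distrib, ← Finset.mul_sum]
    rw [fin_sum_val4, rowsum]
    congr 1
    congr 1
    exact (Finset.sum_ite_eq Finset.univ i (fun j => val4 P Q R L (j:ℕ))).trans (if_pos (Finset.mem_univ i))
  show (∑ i : Fin (1 + m + 2), val4 P Q R L (i:ℕ) *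
      (signedCompleteMatrix (doubleStar 1 m) *ᵥ fun j : Fin (1 + m + 2) => val4 P Q R L (j:ℕ)) i) = _
  rw [Finset.sum_congr rfl (fun i _ => by rw [hv i])]
  have hpt : ∀ i : Fin (1 + m + 2),
      val4 P Q R L (i:ℕ) * ((P + Q + R + (m:ℝ) * L) - val4 P Q R L (i:ℕ)
        - 2 * val4 (Q + R) (P + (m:ℝ) * L) P Q (i:ℕ))
      = val4 (P * ((P + Q + R + (m:ℝ) * L) - P - 2 * (Q + R)))
          (Q * ((P + Q + R + (m:ℝ) * L) - Q - 2 * (P + (m:ℝ) * L)))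
          (R * ((P + Q + R + (m:ℝ) * L) - R - 2 * P))
          (L * ((P + Q + R + (m:ℝ) * L) - L - 2 * Q)) (i:ℕ) := by
    intro i; unfold val4; split_ifs <;> ring
  rw [Finset.sum_congr rfl (fun i _ => hpt i), fin_sum_val4]

lemma scm_xx (m : ℕ) (P Q R L : ℝ) :
    (fun j : Fin (1 + m + 2) => val4 P Q R L (j:ℕ)) ⬝ᵥ
      (fun j : Fin (1 + m + 2) => val4 P Q R L (j:ℕ))
    = P * P + Q * Q + R * R + (m:ℝ) * (L * L) := by
  show (∑ j : Fin (1 + m + 2), val4 P Q R L (j:ℕ) * val4 P Q R L (j:ℕ)) = _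
  have hpt : ∀ j : Fin (1 + m + 2),
      val4 P Q R L (j:ℕ) * val4 P Q R L (j:ℕ) = val4 (P*P) (Q*Q) (R*R) (L*L) (j:ℕ) := by
    intro j; unfold val4; split_ifs <;> ring
  rw [Finset.sum_congr rfl (fun j _ => hpt j), fin_sum_val4]

lemma spec_bdd {k : ℕ} (T : SimpleGraph (Fin k)) (μ : ℝ)
    (hμ : μ ∈ {μ : ℝ | ∃ x : Fin k → ℝ, x ≠ 0 ∧ (signedCompleteMatrix T).mulVec x = μ • x}) :
    μ ≤ (k:ℝ) := by
  obtain ⟨x, hx0, hx⟩ := hμ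
  rcases Nat.eq_zero_or_pos k with hk | hk
  · exfalso; apply hx0; ext i; exact absurd i.isLt (by omega)
  have : Nonempty (Fin k) := ⟨⟨0, hk⟩⟩
  obtain ⟨i, -, hi⟩ := Finset.exists_max_image Finset.univ (fun j => |x j|) Finset.univ_nonempty
  have hipos : 0 < |x i| := by
    obtain ⟨j, hj⟩ := Function.ne_iff.1 hx0
    exact lt_of_lt_of_le (abs_pos.2 hj) (hi j (Finset.mem_univ j))
  have h1 : μ * x i = ∑ j, signedCompleteMatrix T i j * x j := by
    have h := congrFun hx i
    simp only [Matrix.mulVec, dotProduct, Pi.smul_apply, smul_eq_mul] at h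
    exact h.symm
  have h2 : |μ| * |x i| ≤ (k:ℝ) * |x i| := by
    rw [← abs_mul, h1]
    calc |∑ j, signedCompleteMatrix T i j * x j|
        ≤ ∑ j, |signedCompleteMatrix T i j * x j| := Finset.abs_sum_le_sum_abs _ _
      _ ≤ ∑ _j : Fin k, |x i| := by
          apply Finset.sum_le_sum
          intro j _
          rw [abs_mul]
          have hb : |signedCompleteMatrix T i j| ≤ 1 := by
            unfold signedCompleteMatrix; split_ifs <;> norm_num
          calc |signedCompleteMatrix T i j| * |x j|
              ≤ 1 * |x j| := mul_le_mul_of_nonneg_right hb (abs_nonneg _)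
            _ = |x j| := one_mul _
            _ ≤ |x i| := hi j (Finset.mem_univ j)
      _ = (k:ℝ) * |x i| := by
          rw [Finset.sum_const, Finset.card_univ, Fintype.card_fin, nsmul_eq_mul]
  exact le_trans (le_abs_self μ) (le_of_mul_le_mul_right h2 hipos)

lemma psd_shift {k : ℕ} {M : Matrix (Fin k) (Fin k) ℝ} (hA : M.IsHermitian) (c : ℝ)
    (hc : ∀ i, hA.eigenvalues i ≤ c) : (c • (1 : Matrix (Fin k) (Fin k) ℝ) - M).PosSemidef := by
  have hV : (hA.eigenvectorUnitary : Matrix (Fin k) (Fin k) ℝ) *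
      star (hA.eigenvectorUnitary : Matrix (Fin k) (Fin k) ℝ) = 1 :=
    Matrix.mem_unitaryGroup_iff.mp (hA.eigenvectorUnitary).2
  have hdiag : Matrix.diagonal (fun i => c - hA.eigenvalues i)
      = c • (1 : Matrix (Fin k) (Fin k) ℝ)
        - Matrix.diagonal (RCLike.ofReal ∘ hA.eigenvalues) := by
    ext i j
    by_cases h : i = j <;>
      simp [Matrix.diagonal_apply, Matrix.one_apply, h]
  have heq : c • (1 : Matrix (Fin k) (Fin k) ℝ) - M
      = (hA.eigenvectorUnitary : Matrix (Fin k) (Fin k) ℝ) *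
          Matrix.diagonal (fun i => c - hA.eigenvalues i) *
          star (hA.eigenvectorUnitary : Matrix (Fin k) (Fin k) ℝ) := by
    rw [hdiag, Matrix.mul_sub, Matrix.sub_mul, Matrix.mul_smul, mul_one, Matrix.smul_mul, hV]
    conv_lhs => rw [hA.spectral_theorem, Unitary.conjStarAlgAut_apply]
  rw [heq, Matrix.star_eq_conjTranspose]
  exact Matrix.PosSemidef.mul_mul_conjTranspose_same
    (Matrix.PosSemidef.diagonal (fun i => by simpa using sub_nonneg.mpr (hc i))) _

end Aux

/-- For `n ≥ 6`, `λ₁(A((K_n, T⁻_{1,n-3}))) > n - 2`. -/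
theorem stmt11 (n : ℕ) (hn : 6 ≤ n) :
    (n : ℝ) - 2 < lambdaMax (signedCompleteMatrix (doubleStar 1 (n - 3))) := by
  classical
  set m : ℕ := n - 3 with hmdef
  have hm3 : 3 ≤ m := by omega
  have hncast : (n:ℝ) = (m:ℝ) + 3 := by
    have : n = m + 3 := by omega
    rw [this]; push_cast; ring
  set M : Matrix (Fin (1 + m + 2)) (Fin (1 + m + 2)) ℝ :=
    signedCompleteMatrix (doubleStar 1 m) with hMdef
  have hA : M.IsHermitian := scm_herm _
  set t : ℝ := (m:ℝ) with htdef
  have ht3 : (3:ℝ) ≤ t := by rw [htdef]; exact_mod_cast hm3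
  set c : ℝ := (n:ℝ) - 2 with hcdef
  set P : ℝ := t^2
  set Q : ℝ := -t^2
  set R : ℝ := t*(t-2)
  set L : ℝ := (t+2)*(t-1)
  set x : Fin (1 + m + 2) → ℝ := fun j => val4 P Q R L (j:ℕ) with hxdef
  have hQF : dotProduct x (M.mulVec x) = P * ((P + Q + R + t * L) - P - 2 * (Q + R))
      + Q * ((P + Q + R + t * L) - Q - 2 * (P + t * L))
      + R * ((P + Q + R + t * L) - R - 2 * P)
      + t * (L * ((P + Q + R + t * L) - L - 2 * Q)) := scm_qf m P Q R L
  have hxx : dotProduct x x = P * P + Q * Q + R * R + t * (L * L) := scm_xx m P Q R L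
  have hkey : c * (dotProduct x x) < dotProduct x (M.mulVec x) := by
    rw [hQF, hxx, hcdef, hncast]
    have hident : (P * ((P + Q + R + t * L) - P - 2 * (Q + R))
      + Q * ((P + Q + R + t * L) - Q - 2 * (P + t * L))
      + R * ((P + Q + R + t * L) - R - 2 * P)
      + t * (L * ((P + Q + R + t * L) - L - 2 * Q)))
      - ((t + 3) - 2) * (P * P + Q * Q + R * R + t * (L * L))
      = (t+2)*(t-1)*t*(t-2)^2 := by
      unfold P Q R L
      ring
    nlinarith [hident, sq_nonneg (t-2), mul_pos (mul_pos (by linarith : (0:ℝ) < t+2) (by linarith : (0:ℝ) < t-1)) (by linarith : (0:ℝ) < t)]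
  have hex : ∃ i, c < hA.eigenvalues i := by
    by_contra hcon
    push_neg at hcon
    have hps := psd_shift hA c hcon
    have h2 := hps.dotProduct_mulVec_nonneg x
    rw [Matrix.sub_mulVec, Matrix.smul_mulVec, Matrix.one_mulVec,
      dotProduct_sub, dotProduct_smul, star_trivial] at h2
    simp only [smul_eq_mul] at h2
    linarith
  obtain ⟨i, hi⟩ := hex
  have hnz : (⇑(hA.eigenvectorBasis i) : Fin (1 + m + 2) → ℝ) ≠ 0 := by
    intro h
    apply hA.eigenvectorBasis.orthonormal.ne_zero i
    ext j
    exact congrFun h j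
  have hmem : hA.eigenvalues i ∈
      {μ : ℝ | ∃ y : Fin (1 + m + 2) → ℝ, y ≠ 0 ∧ M.mulVec y = μ • y} :=
    ⟨⇑(hA.eigenvectorBasis i), hnz, hA.mulVec_eigenvectorBasis i⟩
  exact lt_csSup_of_lt ⟨((1 + m + 2 : ℕ) : ℝ), fun μ hμ => spec_bdd _ μ hμ⟩ hmem hi
end

section
/- Let n ≥ 6 and let Σ = (K_n, T^-_{1,n-3}) be the signed complete graph whose negative edges form the spanning double star T_{1,n-3}. Then λ_n(A(Σ)) > −4. -/
/- ========================= auxiliary lemmas ========================= -/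

/-- Any (real) eigenvalue of a matrix is a root of its characteristic polynomial. -/
lemma aux_root_of_eig {N : ℕ} (M : Matrix (Fin N) (Fin N) ℝ) (μ : ℝ) (x : Fin N → ℝ)
    (hx : x ≠ 0) (h : M.mulVec x = μ • x) : M.charpoly.IsRoot μ := by
  have hdet : (Matrix.diagonal (fun _ : Fin N => μ) - M).det = 0 := by
    rw [← Matrix.exists_mulVec_eq_zero_iff]
    refine ⟨x, hx, ?_⟩
    funext i
    simp [Matrix.sub_mulVec, Matrix.mulVec_diagonal, h, mul_comm]
  have hmap : (Matrix.charmatrix M).map (Polynomial.eval μ)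
      = Matrix.diagonal (fun _ : Fin N => μ) - M := by
    ext i j
    by_cases hij : i = j
    · subst hij
      simp [Matrix.charmatrix_apply_eq, Matrix.diagonal]
    · simp [Matrix.charmatrix_apply_ne _ _ _ hij, Matrix.diagonal_apply_ne _ hij]
  have : Polynomial.eval μ M.charpoly
      = ((Matrix.charmatrix M).map (Polynomial.evalRingHom μ)).det := by
    rw [Matrix.charpoly]
    simpa [RingHom.mapMatrix_apply] using
      RingHom.map_det (Polynomial.evalRingHom μ) (Matrix.charmatrix M)
  simpa [Polynomial.IsRoot, this, hmap] using hdet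

/-- Splitting a sum over `Fin (1+m+2)` into the first three terms and the tail. -/
lemma aux_sum_split (m : ℕ) (f : Fin (1 + m + 2) → ℝ) :
    ∑ i, f i = f ⟨0, by omega⟩ + f ⟨1, by omega⟩ + f ⟨2, by omega⟩
      + ∑ i, (if 3 ≤ (i : Fin (1 + m + 2)).val then f i else 0) := by
  classical
  have hpt : ∀ i : Fin (1 + m + 2),
      f i = (if 3 ≤ i.val then f i else 0) + (if i.val < 3 then f i else 0) := by
    intro i; split_ifs <;> first | ring1 | (exfalso; omega)
  rw [Finset.sum_congr rfl (fun i _ => hpt i), Finset.sum_add_distrib]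
  have hfil : ∑ i, (if (i : Fin (1 + m + 2)).val < 3 then f i else 0)
      = ∑ i ∈ Finset.univ.filter (fun i : Fin (1 + m + 2) => i.val < 3), f i := by
    rw [Finset.sum_filter]
  have hset : Finset.univ.filter (fun i : Fin (1 + m + 2) => i.val < 3)
      = {(⟨0, by omega⟩ : Fin (1 + m + 2)), ⟨1, by omega⟩, ⟨2, by omega⟩} := by
    ext i
    simp only [Finset.mem_filter, Finset.mem_univ, true_and, Finset.mem_insert,
      Finset.mem_singleton, Fin.ext_iff, Fin.val_mk]
    omega
  rw [hfil, hset]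
  rw [Finset.sum_insert (by simp [Fin.ext_iff]), Finset.sum_insert (by simp [Fin.ext_iff]),
    Finset.sum_singleton]
  ring

set_option maxHeartbeats 1600000 in
/-- The quadratic form of the signed complete matrix of the double star `T_{1,m}`. -/
lemma aux_quad (m : ℕ) (x : Fin (1 + m + 2) → ℝ) (v0 v1 v2 : Fin (1 + m + 2))
    (h0 : v0.val = 0) (h1 : v1.val = 1) (h2 : v2.val = 2) :
    ∑ i, x i * ((signedCompleteMatrix (doubleStar 1 m)).mulVec x) i
      = (∑ i, x i) * (∑ i, x i) - (∑ i, x i * x i)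
        - 4 * (x v0 * x v1) - 4 * (x v0 * x v2)
        - 4 * (x v1 * (∑ j, if 3 ≤ (j : Fin (1 + m + 2)).val then x j else 0)) := by
  classical
  have key : ∀ i j : Fin (1 + m + 2),
      x i * (signedCompleteMatrix (doubleStar 1 m) i j * x j) =
      (x i * x j - (if i = j then x i * x j else 0))
      - 2 * ((if i = v0 ∧ j = v1 then x i * x j else 0)
           + (if i = v1 ∧ j = v0 then x i * x j else 0)
           + (if i = v0 ∧ j = v2 then x i * x j else 0)
           + (if i = v2 ∧ j = v0 then x i * x j else 0)
           + (if i = v1 ∧ 3 ≤ j.val then x i * x j else 0)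
           + (if 3 ≤ i.val ∧ j = v1 then x i * x j else 0)) := by
    intro i j
    simp only [signedCompleteMatrix, doubleStar, SimpleGraph.fromRel_adj, ne_eq,
      Fin.ext_iff, h0, h1, h2]
    split_ifs <;> first | ring1 | (exfalso; omega)
  have lhs1 : ∑ i, x i * ((signedCompleteMatrix (doubleStar 1 m)).mulVec x) i
      = ∑ i, ∑ j, x i * (signedCompleteMatrix (doubleStar 1 m) i j * x j) := by
    simp [Matrix.mulVec, dotProduct, Finset.mul_sum]
  have E1 : ∑ i : Fin (1 + m + 2), (x i * ∑ j, x j) = (∑ i, x i) * (∑ i, x i) := by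
    rw [← Finset.sum_mul]
  have E2 : ∑ i : Fin (1 + m + 2), ∑ j, (if i = j then x i * x j else 0)
      = ∑ i, x i * x i := by
    simp [Finset.sum_ite_eq]
  have E3 : ∑ i : Fin (1 + m + 2), ∑ j, (if i = v0 ∧ j = v1 then x i * x j else 0)
      = x v0 * x v1 := by simp [ite_and, Finset.sum_ite_eq']
  have E4 : ∑ i : Fin (1 + m + 2), ∑ j, (if i = v1 ∧ j = v0 then x i * x j else 0)
      = x v1 * x v0 := by simp [ite_and, Finset.sum_ite_eq']
  have E5 : ∑ i : Fin (1 + m + 2), ∑ j, (if i = v0 ∧ j = v2 then x i * x j else 0)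
      = x v0 * x v2 := by simp [ite_and, Finset.sum_ite_eq']
  have E6 : ∑ i : Fin (1 + m + 2), ∑ j, (if i = v2 ∧ j = v0 then x i * x j else 0)
      = x v2 * x v0 := by simp [ite_and, Finset.sum_ite_eq']
  have E7 : ∑ i : Fin (1 + m + 2), ∑ j, (if i = v1 ∧ 3 ≤ j.val then x i * x j else 0)
      = x v1 * ∑ j, (if 3 ≤ (j : Fin (1 + m + 2)).val then x j else 0) := by
    simp [ite_and, Finset.sum_ite_eq', Finset.mul_sum, mul_ite]
  have E8 : ∑ i : Fin (1 + m + 2), ∑ j, (if 3 ≤ i.val ∧ j = v1 then x i * x j else 0)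
      = (∑ j, (if 3 ≤ (j : Fin (1 + m + 2)).val then x j else 0)) * x v1 := by
    simp [ite_and, Finset.sum_ite_eq', Finset.sum_mul, ite_mul]
  rw [lhs1, Finset.sum_congr rfl (fun i _ => Finset.sum_congr rfl (fun j _ => key i j))]
  simp only [Finset.sum_sub_distrib, Finset.sum_add_distrib, ← Finset.mul_sum]
  rw [E1, E2, E3, E4, E5, E6, E7, E8]
  ring

set_option maxHeartbeats 1600000 in
/-- Every eigenvalue of the signed complete matrix of `T_{1,m}` exceeds `-4`. -/
lemma aux_eig (m : ℕ) (hm : 3 ≤ m) (μ : ℝ) (x : Fin (1 + m + 2) → ℝ) (hx : x ≠ 0)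
    (hev : (signedCompleteMatrix (doubleStar 1 m)).mulVec x = μ • x) : -4 < μ := by
  classical
  set v0 : Fin (1 + m + 2) := ⟨0, by omega⟩ with hv0
  set v1 : Fin (1 + m + 2) := ⟨1, by omega⟩ with hv1
  set v2 : Fin (1 + m + 2) := ⟨2, by omega⟩ with hv2
  set a := x v0 with ha
  set b := x v1 with hb
  set c := x v2 with hc
  set t := ∑ j, (if 3 ≤ (j : Fin (1 + m + 2)).val then x j else 0) with ht
  set q := ∑ j, (if 3 ≤ (j : Fin (1 + m + 2)).val then x j * x j else 0) with hq
  set s := ∑ i, x i with hs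
  set p := ∑ i, x i * x i with hp
  have hS : s = a + b + c + t := aux_sum_split m x
  have hP : p = a * a + b * b + c * c + q := aux_sum_split m (fun i => x i * x i)
  have hQ := aux_quad m x v0 v1 v2 rfl rfl rfl
  have hdot : ∑ i, x i * ((signedCompleteMatrix (doubleStar 1 m)).mulVec x) i = μ * p := by
    rw [hev, hp, Finset.mul_sum]
    refine Finset.sum_congr rfl (fun i _ => ?_)
    simp [Pi.smul_apply, smul_eq_mul]; ring
  have hkey : μ * p = s * s - p - 4 * (a * b) - 4 * (a * c) - 4 * (b * t) := by
    rw [← hdot, hQ]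
  obtain ⟨k, hk⟩ : ∃ k, x k ≠ 0 := by
    by_contra hcon
    push_neg at hcon
    exact hx (funext fun k => hcon k)
  have hq0 : 0 ≤ q := by
    apply Finset.sum_nonneg
    intro i _
    split_ifs
    · exact mul_self_nonneg _
    · exact le_refl 0
  have hppos : 0 < p := by
    apply Finset.sum_pos'
    · intro i _; exact mul_self_nonneg _
    · exact ⟨k, Finset.mem_univ k, mul_self_pos.mpr hk⟩
  -- the quadratic form is strictly bigger than -4 p
  have hE : 0 < s * s + 3 * p - 4 * (a * b) - 4 * (a * c) - 4 * (b * t) := by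
    rw [hS, hP]
    by_cases hk3 : 3 ≤ k.val
    · have hqpos : 0 < q := by
        have hle : x k * x k ≤ q := by
          rw [hq]
          have := Finset.single_le_sum (f := fun j : Fin (1 + m + 2) =>
            if 3 ≤ j.val then x j * x j else 0)
            (fun i _ => by split_ifs; exacts [mul_self_nonneg _, le_refl 0])
            (Finset.mem_univ k)
          simpa [hk3] using this
        exact lt_of_lt_of_le (mul_self_pos.mpr hk) hle
      nlinarith [sq_nonneg (t + a - b + c), sq_nonneg (3 * a - 2 * c), sq_nonneg (3 * b + 2 * c),
        sq_nonneg c, hqpos]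
    · have hk' : k = v0 ∨ k = v1 ∨ k = v2 := by
        have h3 : k.val = 0 ∨ k.val = 1 ∨ k.val = 2 := by omega
        rcases h3 with h | h | h
        · exact Or.inl (Fin.ext (by simp [hv0, h]))
        · exact Or.inr (Or.inl (Fin.ext (by simp [hv1, h])))
        · exact Or.inr (Or.inr (Fin.ext (by simp [hv2, h])))
      rcases hk' with h | h | h
      · by_cases hcz : c = 0
        · have hapos : 0 < a * a := mul_self_pos.mpr (by rw [ha, ← h]; exact hk)
          nlinarith [sq_nonneg (t + a - b + c), sq_nonneg (3 * a - 2 * c),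
            sq_nonneg (3 * b + 2 * c), sq_nonneg c, hq0, hapos, hcz]
        · have hcpos : 0 < c * c := mul_self_pos.mpr hcz
          nlinarith [sq_nonneg (t + a - b + c), sq_nonneg (3 * a - 2 * c),
            sq_nonneg (3 * b + 2 * c), hq0, hcpos]
      · by_cases hcz : c = 0
        · have hbpos : 0 < b * b := mul_self_pos.mpr (by rw [hb, ← h]; exact hk)
          nlinarith [sq_nonneg (t + a - b + c), sq_nonneg (3 * a - 2 * c),
            sq_nonneg (3 * b + 2 * c), sq_nonneg c, hq0, hbpos, hcz]
        · have hcpos : 0 < c * c := mul_self_pos.mpr hcz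
          nlinarith [sq_nonneg (t + a - b + c), sq_nonneg (3 * a - 2 * c),
            sq_nonneg (3 * b + 2 * c), hq0, hcpos]
      · have hcpos : 0 < c * c := mul_self_pos.mpr (by rw [hc, ← h]; exact hk)
        nlinarith [sq_nonneg (t + a - b + c), sq_nonneg (3 * a - 2 * c),
          sq_nonneg (3 * b + 2 * c), hq0, hcpos]
  have hmul : 0 < (μ + 4) * p := by nlinarith [hkey, hE]
  nlinarith [hmul, hppos]

/-- For `n ≥ 6`, `λₙ(A((K_n, T⁻_{1,n-3}))) > -4`. -/
theorem stmt12 (n : ℕ) (hn : 6 ≤ n) :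
    -4 < lambdaMin (signedCompleteMatrix (doubleStar 1 (n - 3))) := by
  classical
  have hm : 3 ≤ n - 3 := by omega
  set M := signedCompleteMatrix (doubleStar 1 (n - 3)) with hM
  unfold lambdaMin
  set S := {μ : ℝ | ∃ x : Fin (1 + (n - 3) + 2) → ℝ, x ≠ 0 ∧ M.mulVec x = μ • x} with hSdef
  have hfin : S.Finite := by
    apply Set.Finite.subset (Polynomial.finite_setOf_isRoot (p := M.charpoly)
      (Matrix.charpoly_monic M).ne_zero)
    rintro μ ⟨x, hx, hxe⟩
    exact aux_root_of_eig M μ x hx hxe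
  rcases Set.eq_empty_or_nonempty S with hS | hS
  · rw [hS, Real.sInf_empty]; norm_num
  · obtain ⟨x, hx, hxe⟩ := hS.csInf_mem hfin
    exact aux_eig (n - 3) hm _ x hx hxe
end

section
/- Let Σ=(G,σ) be a connected signed graph on n ≥ 2 vertices. Then λ_n(D^max(Σ)) = λ_n(D^min(Σ)) = −1 if and only if Σ is a balanced signed complete graph (the underlying graph G is K_n and Σ is balanced). -/
/-- The sign of a walk: the product of the signs of its edges. -/
noncomputable def walkSign {V : Type*} {G : SimpleGraph V} (σ : V → V → ℝ)
    {u v : V} (p : G.Walk u v) : ℝ :=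
  (p.darts.map fun d => σ d.toProd.1 d.toProd.2).prod

/-- A signed graph is balanced if every cycle has positive sign. -/
def IsBalanced {V : Type*} (G : SimpleGraph V) (σ : V → V → ℝ) : Prop :=
  ∀ (u : V) (p : G.Walk u u), p.IsCycle → walkSign σ p = 1

/-- `σ_max(u,v)`: the maximum sign of a shortest `u`–`v` path. -/
noncomputable def sigmaMax {V : Type*} (G : SimpleGraph V) (σ : V → V → ℝ) (u v : V) : ℝ :=
  sSup {s : ℝ | ∃ p : G.Walk u v, p.length = G.dist u v ∧ walkSign σ p = s}

/-- `σ_min(u,v)`: the minimum sign of a shortest `u`–`v` path. -/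
noncomputable def sigmaMin {V : Type*} (G : SimpleGraph V) (σ : V → V → ℝ) (u v : V) : ℝ :=
  sInf {s : ℝ | ∃ p : G.Walk u v, p.length = G.dist u v ∧ walkSign σ p = s}

/-- The signed distance matrix `D^max(Σ)`. -/
noncomputable def Dmax {V : Type*} (G : SimpleGraph V) (σ : V → V → ℝ) : Matrix V V ℝ :=
  fun u v => sigmaMax G σ u v * (G.dist u v : ℝ)

/-- The signed distance matrix `D^min(Σ)`. -/
noncomputable def Dmin {V : Type*} (G : SimpleGraph V) (σ : V → V → ℝ) : Matrix V V ℝ :=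
  fun u v => sigmaMin G σ u v * (G.dist u v : ℝ)

/-- `G` has diameter `d`. -/
def HasDiameter {V : Type*} (G : SimpleGraph V) (d : ℕ) : Prop :=
  (∀ u v, G.dist u v ≤ d) ∧ ∃ u v, G.dist u v = d


open Matrix

section WS
variable {V : Type*} {G : SimpleGraph V} {σ : V → V → ℝ}

@[simp] lemma walkSign_nil {u : V} : walkSign σ (SimpleGraph.Walk.nil : G.Walk u u) = 1 := by
  simp [walkSign]

@[simp] lemma walkSign_cons {u a v : V} (h : G.Adj u a) (p : G.Walk a v) :
    walkSign σ (SimpleGraph.Walk.cons h p) = σ u a * walkSign σ p := by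
  simp [walkSign]

lemma walkSign_pm (hσ : EdgeSigns G σ) {u v : V} (p : G.Walk u v) :
    walkSign σ p = 1 ∨ walkSign σ p = -1 := by
  induction p with
  | nil => left; simp
  | cons h p ih =>
    rw [walkSign_cons]
    rcases hσ.2 _ _ h with h1 | h1 <;> rcases ih with h2 | h2 <;> rw [h1, h2] <;> norm_num

lemma walkSign_reverse (hσ : EdgeSigns G σ) {u v : V} (p : G.Walk u v) :
    walkSign σ p.reverse = walkSign σ p := by
  unfold walkSign
  rw [SimpleGraph.Walk.darts_reverse, List.map_reverse, List.prod_reverse, List.map_map]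
  congr 1
  apply List.map_congr_left
  intro d _
  exact (hσ.1 _ _)

lemma walkSign_tau {τ : V → ℝ} (hτ : ∀ a, τ a = 1 ∨ τ a = -1)
    (hστ : ∀ a b, G.Adj a b → σ a b = τ a * τ b) {u v : V} (p : G.Walk u v) :
    walkSign σ p = τ u * τ v := by
  induction p with
  | nil =>
    rename_i w
    rcases hτ w with h | h <;> rw [walkSign_nil, h] <;> norm_num
  | cons h p ih =>
    rename_i a b c
    rw [walkSign_cons, ih, hστ _ _ h]
    rcases hτ b with h1 | h1 <;> rw [h1] <;> ring
end WS


def signSet {V : Type*} (G : SimpleGraph V) (σ : V → V → ℝ) (u v : V) : Set ℝ :=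
  {s : ℝ | ∃ p : G.Walk u v, p.length = G.dist u v ∧ walkSign σ p = s}

section SS
variable {V : Type*} {G : SimpleGraph V} {σ : V → V → ℝ}

lemma sigmaMax_def (u v : V) : sigmaMax G σ u v = sSup (signSet G σ u v) := rfl
lemma sigmaMin_def (u v : V) : sigmaMin G σ u v = sInf (signSet G σ u v) := rfl

lemma signSet_subset (hσ : EdgeSigns G σ) (u v : V) :
    signSet G σ u v ⊆ {1, -1} := by
  rintro s ⟨p, _, rfl⟩
  exact walkSign_pm hσ p

lemma signSet_finite (hσ : EdgeSigns G σ) (u v : V) : (signSet G σ u v).Finite :=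
  Set.Finite.subset (Set.toFinite ({1, -1} : Set ℝ)) (signSet_subset hσ u v)

lemma signSet_nonempty (hG : G.Connected) (u v : V) : (signSet G σ u v).Nonempty := by
  obtain ⟨p, hp⟩ := hG.exists_walk_length_eq_dist u v
  exact ⟨walkSign σ p, p, hp, rfl⟩

lemma signSet_comm (hσ : EdgeSigns G σ) (u v : V) :
    signSet G σ u v = signSet G σ v u := by
  ext s
  constructor <;> rintro ⟨p, hlen, rfl⟩
  · exact ⟨p.reverse, by rw [SimpleGraph.Walk.length_reverse, hlen, SimpleGraph.dist_comm],
      (walkSign_reverse hσ p).symm ▸ rfl⟩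
  · exact ⟨p.reverse, by rw [SimpleGraph.Walk.length_reverse, hlen, SimpleGraph.dist_comm],
      (walkSign_reverse hσ p)⟩

lemma sigmaMax_mem (hG : G.Connected) (hσ : EdgeSigns G σ) (u v : V) :
    sigmaMax G σ u v ∈ signSet G σ u v :=
  Set.Nonempty.csSup_mem (signSet_nonempty hG u v) (signSet_finite hσ u v)

lemma sigmaMin_mem (hG : G.Connected) (hσ : EdgeSigns G σ) (u v : V) :
    sigmaMin G σ u v ∈ signSet G σ u v :=
  Set.Nonempty.csInf_mem (signSet_nonempty hG u v) (signSet_finite hσ u v)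

lemma sigmaMax_pm (hG : G.Connected) (hσ : EdgeSigns G σ) (u v : V) :
    sigmaMax G σ u v = 1 ∨ sigmaMax G σ u v = -1 :=
  signSet_subset hσ u v (sigmaMax_mem hG hσ u v)

lemma sigmaMin_pm (hG : G.Connected) (hσ : EdgeSigns G σ) (u v : V) :
    sigmaMin G σ u v = 1 ∨ sigmaMin G σ u v = -1 :=
  signSet_subset hσ u v (sigmaMin_mem hG hσ u v)

lemma sigmaMax_comm (hσ : EdgeSigns G σ) (u v : V) :
    sigmaMax G σ u v = sigmaMax G σ v u := by
  rw [sigmaMax_def, sigmaMax_def, signSet_comm hσ]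

lemma sigmaMin_comm (hσ : EdgeSigns G σ) (u v : V) :
    sigmaMin G σ u v = sigmaMin G σ v u := by
  rw [sigmaMin_def, sigmaMin_def, signSet_comm hσ]
end SS

section Adj1
variable {V : Type*} {G : SimpleGraph V} {σ : V → V → ℝ}

lemma signSet_of_adj {u v : V} (h : G.Adj u v) : signSet G σ u v = {σ u v} := by
  have hd : G.dist u v = 1 := SimpleGraph.dist_eq_one_iff_adj.mpr h
  ext s
  constructor
  · rintro ⟨p, hlen, rfl⟩
    rw [hd] at hlen
    cases p with
    | nil => simp at hlen
    | cons h' q =>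
      cases q with
      | nil => simp
      | cons h'' q' => simp [SimpleGraph.Walk.length_cons] at hlen
  · rintro rfl
    exact ⟨SimpleGraph.Walk.cons h SimpleGraph.Walk.nil, by simp [hd], by simp⟩

lemma sigmaMax_of_adj {u v : V} (h : G.Adj u v) : sigmaMax G σ u v = σ u v := by
  rw [sigmaMax_def, signSet_of_adj h, csSup_singleton]

lemma sigmaMin_of_adj {u v : V} (h : G.Adj u v) : sigmaMin G σ u v = σ u v := by
  rw [sigmaMin_def, signSet_of_adj h, csInf_singleton]
end Adj1


section TriX
variable {V : Type*} {G : SimpleGraph V} {σ : V → V → ℝ}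

lemma triangle_sign (hB : IsBalanced G σ) {a b c : V} (hab : a ≠ b) (hbc : b ≠ c) (hca : c ≠ a)
    (h1 : G.Adj a b) (h2 : G.Adj b c) (h3 : G.Adj c a) :
    σ a b * σ b c * σ c a = 1 := by
  set p : G.Walk a a := SimpleGraph.Walk.cons h1 (SimpleGraph.Walk.cons h2
    (SimpleGraph.Walk.cons h3 SimpleGraph.Walk.nil)) with hp
  have hcyc : p.IsCycle := by
    rw [hp]
    constructor
    · constructor
      · rw [SimpleGraph.Walk.isTrail_def]
        simp only [SimpleGraph.Walk.edges_cons, SimpleGraph.Walk.edges_nil]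
        simp [List.nodup_cons, Sym2.eq_iff]
        refine ⟨⟨?_, ?_⟩, ?_⟩ <;> tauto
      · simp
    · simp only [SimpleGraph.Walk.support_cons, SimpleGraph.Walk.support_nil, List.tail_cons]
      simp [List.nodup_cons]
      tauto
  have := hB a p hcyc
  rw [hp] at this
  simpa [mul_assoc] using this
end TriX


section A
variable {V : Type*} [DecidableEq V] {G : SimpleGraph V} {σ : V → V → ℝ}

lemma tau_spec (htop : G = ⊤) (hσ : EdgeSigns G σ)
    (htri : ∀ a b c : V, a ≠ b → b ≠ c → c ≠ a → σ a b * σ b c * σ c a = 1) (v0 : V) :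
    ∃ τ : V → ℝ, (∀ a, τ a = 1 ∨ τ a = -1) ∧ ∀ a b, G.Adj a b → σ a b = τ a * τ b := by
  have hadj : ∀ a b : V, a ≠ b → G.Adj a b := by
    intro a b hab; rw [htop]; exact hab
  refine ⟨fun v => if v = v0 then (1:ℝ) else σ v0 v, ?_, ?_⟩
  · intro a
    by_cases h : a = v0
    · left; simp [h]
    · have := hσ.2 v0 a (hadj v0 a (Ne.symm h))
      simp only [if_neg h]
      exact this
  · intro a b hab'
    have hab : a ≠ b := hab'.ne
    by_cases ha : a = v0
    · subst ha
      have hb' : ¬ (b = a) := fun h => hab h.symm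
      simp [hb']
    · by_cases hb : b = v0
      · subst hb
        simp only [if_neg ha, if_true, ite_true, eq_self_iff_true, mul_one]
        exact hσ.1 a b
      · simp only [if_neg ha, if_neg hb]
        have h1 := htri v0 a b (fun h => ha h.symm) hab (fun h => hb h)
        have s1 := hσ.2 v0 a (hadj v0 a (fun h => ha h.symm))
        have s3 := hσ.2 b v0 (hadj b v0 hb)
        have hsymm : σ b v0 = σ v0 b := hσ.1 b v0
        rcases s1 with e | e <;> rcases s3 with f | f <;>
          rw [e, f] at h1 <;> rw [e, ← hsymm, f] <;> linarith
end A

lemma balanced_of_tri {V : Type*} [DecidableEq V] {G : SimpleGraph V} {σ : V → V → ℝ}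
    (htop : G = ⊤) (hσ : EdgeSigns G σ)
    (htri : ∀ a b c : V, a ≠ b → b ≠ c → c ≠ a → σ a b * σ b c * σ c a = 1) :
    IsBalanced G σ := by
  intro u p _
  obtain ⟨τ, hτpm, hστ⟩ := tau_spec htop hσ htri u
  rw [walkSign_tau hτpm hστ p]
  rcases hτpm u with h | h <;> rw [h] <;> norm_num

section Rayleigh
variable {n : ℕ}

lemma inner_dot (a b : EuclideanSpace ℝ (Fin n)) :
    (inner ℝ a b : ℝ) = a ⬝ᵥ b := by
  simp [PiLp.inner_apply, RCLike.inner_apply, dotProduct, mul_comm]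

lemma dot_norm (a : EuclideanSpace ℝ (Fin n)) : a ⬝ᵥ a = ‖a‖ ^ 2 := by
  rw [← inner_dot, real_inner_self_eq_norm_sq]

lemma dot_self_pos (a : Fin n → ℝ) (h : a ≠ 0) : 0 < a ⬝ᵥ a := by
  obtain ⟨i, hi⟩ : ∃ i, a i ≠ 0 := by
    by_contra hc
    push_neg at hc
    exact h (funext hc)
  have : (0:ℝ) < ∑ j, a j * a j :=
    Finset.sum_pos' (fun j _ => mul_self_nonneg _) ⟨i, Finset.mem_univ i, mul_self_pos.mpr hi⟩
  simpa [dotProduct] using this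

lemma rayleigh_bound (hn : 0 < n) (M : Matrix (Fin n) (Fin n) ℝ) (hM : M.IsHermitian)
    (x : Fin n → ℝ) (hx : x ≠ 0) : lambdaMin M * (x ⬝ᵥ x) ≤ M.mulVec x ⬝ᵥ x := by
  classical
  haveI : Nontrivial (EuclideanSpace ℝ (Fin n)) := by
    have : Nonempty (Fin n) := ⟨⟨0, hn⟩⟩
    infer_instance
  set T : EuclideanSpace ℝ (Fin n) →ₗ[ℝ] EuclideanSpace ℝ (Fin n) := Matrix.toEuclideanLin M with hT
  have hsym : T.IsSymmetric := Matrix.isHermitian_iff_isSymmetric.mp hM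
  have hTapp : ∀ y : EuclideanSpace ℝ (Fin n), T y = M.mulVec y := fun y => rfl
  set R : {y : EuclideanSpace ℝ (Fin n) // y ≠ 0} → ℝ :=
    fun y => RCLike.re (inner ℝ (T y) (y : EuclideanSpace ℝ (Fin n)) : ℝ) / ‖(y : EuclideanSpace ℝ (Fin n))‖ ^ 2 with hR
  have hRval : ∀ y : {y : EuclideanSpace ℝ (Fin n) // y ≠ 0},
      R y = (M.mulVec y.1 ⬝ᵥ y.1) / (y.1 ⬝ᵥ y.1) := by
    intro y
    rw [hR]
    simp only [RCLike.re_to_real]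
    rw [inner_dot, hTapp, dot_norm]
  set C : ℝ := ‖(LinearMap.toContinuousLinearMap T)‖ with hC
  have hRb : BddBelow (Set.range R) := by
    refine ⟨-C, ?_⟩
    rintro r ⟨y, rfl⟩
    have h1 : |(inner ℝ (T y) (y : EuclideanSpace ℝ (Fin n)) : ℝ)| ≤ ‖T y‖ * ‖(y : EuclideanSpace ℝ (Fin n))‖ :=
      abs_real_inner_le_norm _ _
    have h2 : ‖T y‖ ≤ C * ‖(y : EuclideanSpace ℝ (Fin n))‖ :=
      (LinearMap.toContinuousLinearMap T).le_opNorm _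
    have hy : (0:ℝ) < ‖(y : EuclideanSpace ℝ (Fin n))‖ := norm_pos_iff.mpr y.2
    have h4 : |(inner ℝ (T y) (y : EuclideanSpace ℝ (Fin n)) : ℝ)| ≤ C * ‖(y : EuclideanSpace ℝ (Fin n))‖ ^ 2 := by
      nlinarith [norm_nonneg (T (y : EuclideanSpace ℝ (Fin n)))]
    have h5 := (abs_le.mp h4).1
    rw [hR]
    simp only [RCLike.re_to_real]
    rw [le_div_iff₀ (by positivity)]
    nlinarith
  set μ : ℝ := ⨅ y : {y : EuclideanSpace ℝ (Fin n) // y ≠ 0}, R y with hμ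
  have hev : Module.End.HasEigenvalue T μ := hsym.hasEigenvalue_iInf_of_finiteDimensional
  obtain ⟨v, hv⟩ := hev.exists_hasEigenvector
  have hvS : μ ∈ {μ : ℝ | ∃ x : Fin n → ℝ, x ≠ 0 ∧ M.mulVec x = μ • x} := by
    refine ⟨v, (by simpa using hv.2), ?_⟩
    have := Module.End.mem_eigenspace_iff.mp hv.1
    rw [← hTapp, this, WithLp.ofLp_smul]
  have key : ∀ y : Fin n → ℝ, y ≠ 0 → μ * (y ⬝ᵥ y) ≤ M.mulVec y ⬝ᵥ y := by
    intro y hy0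
    have hy0' : WithLp.toLp 2 y ≠ 0 := by simpa using hy0
    have h6 : μ ≤ R ⟨WithLp.toLp 2 y, hy0'⟩ := ciInf_le hRb _
    rw [hRval] at h6
    simp only [WithLp.ofLp_toLp] at h6
    have hpos : (0:ℝ) < y ⬝ᵥ y := dot_self_pos y hy0
    rw [le_div_iff₀ hpos] at h6
    linarith
  have hlb : ∀ ν ∈ {μ : ℝ | ∃ x : Fin n → ℝ, x ≠ 0 ∧ M.mulVec x = μ • x}, μ ≤ ν := by
    rintro ν ⟨y, hy0, hy⟩
    have hpos : (0:ℝ) < y ⬝ᵥ y := dot_self_pos y hy0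
    have h7 := key y hy0
    rw [hy, smul_dotProduct] at h7
    have : ν • (y ⬝ᵥ y) = ν * (y ⬝ᵥ y) := rfl
    rw [this] at h7
    exact le_of_mul_le_mul_right (by linarith) hpos
  have hmin : lambdaMin M = μ :=
    le_antisymm (csInf_le ⟨μ, hlb⟩ hvS) (le_csInf ⟨μ, hvS⟩ hlb)
  rw [hmin]
  exact key x hx
end Rayleigh

lemma lambdaMin_of_tau (n : ℕ) (hn : 2 ≤ n) (τ : Fin n → ℝ) (hτ : ∀ a, τ a = 1 ∨ τ a = -1)
    (M : Matrix (Fin n) (Fin n) ℝ)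
    (hM : ∀ i j, M i j = τ i * τ j - if i = j then (1:ℝ) else 0) : lambdaMin M = -1 := by
  classical
  have hτ2 : ∀ a, τ a * τ a = 1 := by
    intro a; rcases hτ a with h | h <;> rw [h] <;> norm_num
  have hτ0 : ∀ a, τ a ≠ 0 := by
    intro a; rcases hτ a with h | h <;> rw [h] <;> norm_num
  set S := {μ : ℝ | ∃ x : Fin n → ℝ, x ≠ 0 ∧ M.mulVec x = μ • x} with hS
  have hmv : ∀ (x : Fin n → ℝ) (i : Fin n),
      M.mulVec x i = τ i * (∑ j, τ j * x j) - x i := by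
    intro x i
    simp only [Matrix.mulVec, dotProduct, hM, sub_mul]
    rw [Finset.sum_sub_distrib, Finset.mul_sum]
    congr 1
    · exact Finset.sum_congr rfl fun j _ => by ring
    · simp [ite_mul]
  -- -1 is an eigenvalue
  have hu01 : (⟨0, by omega⟩ : Fin n) ≠ ⟨1, by omega⟩ := by
    simp [Fin.ext_iff]
  set u0 : Fin n := ⟨0, by omega⟩
  set u1 : Fin n := ⟨1, by omega⟩
  set x0 : Fin n → ℝ := (Pi.single u0 (τ u0) : Fin n → ℝ) - Pi.single u1 (τ u1) with hx0def
  have e1 : (Pi.single u1 (τ u1) : Fin n → ℝ) u0 = 0 := Pi.single_eq_of_ne hu01 _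
  have e2 : (Pi.single u0 (τ u0) : Fin n → ℝ) u1 = 0 := Pi.single_eq_of_ne (Ne.symm hu01) _
  have hx0u0 : x0 u0 = τ u0 := by
    rw [hx0def]; simp [e1]
  have hmem : (-1 : ℝ) ∈ S := by
    refine ⟨x0, ?_, ?_⟩
    · intro hc
      have := congrFun hc u0
      rw [hx0u0] at this
      exact hτ0 u0 this
    · funext i
      have hsum : (∑ j, τ j * x0 j) = 0 := by
        have hterm : ∀ j, τ j * x0 j
            = τ j * (Pi.single u0 (τ u0) : Fin n → ℝ) j - τ j * (Pi.single u1 (τ u1) : Fin n → ℝ) j := by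
          intro j; rw [hx0def]; simp [Pi.sub_apply]; ring
        rw [Finset.sum_congr rfl (fun j _ => hterm j), Finset.sum_sub_distrib]
        rw [Finset.sum_eq_single u0 (fun j _ hj => by simp [Pi.single_eq_of_ne hj])
          (by simp), Finset.sum_eq_single u1 (fun j _ hj => by simp [Pi.single_eq_of_ne hj])
          (by simp)]
        simp [Pi.single_eq_same, hτ2]
      rw [hmv, hsum]
      simp
  have hlb : ∀ μ ∈ S, (-1:ℝ) ≤ μ := by
    rintro μ ⟨x, hx0, hx⟩
    by_contra hlt
    push_neg at hlt
    have hne : μ + 1 ≠ 0 := by linarith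
    set s : ℝ := ∑ j, τ j * x j with hs
    have heig : ∀ i, τ i * s = (μ + 1) * x i := by
      intro i
      have := congrFun hx i
      rw [hmv] at this
      have : τ i * s - x i = μ * x i := this
      linarith
    have hss : (μ + 1) * s = (n : ℝ) * s := by
      calc (μ + 1) * s = ∑ j, τ j * ((μ + 1) * x j) := by
            rw [hs, Finset.mul_sum]
            exact Finset.sum_congr rfl fun j _ => by ring
      _ = ∑ j, τ j * (τ j * s) := Finset.sum_congr rfl fun j _ => by rw [← heig j]
      _ = ∑ _j : Fin n, s := Finset.sum_congr rfl fun j _ => by rw [← mul_assoc, hτ2, one_mul]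
      _ = (n : ℝ) * s := by simp [mul_comm]
    have hs0 : s = 0 := by
      by_contra hs0
      have : μ + 1 = (n : ℝ) := by
        have := mul_right_cancel₀ hs0 hss
        exact this
      have : (2:ℝ) ≤ (n : ℝ) := by exact_mod_cast hn
      linarith
    have : x = 0 := by
      funext i
      have := heig i
      rw [hs0, mul_zero] at this
      have := this.symm
      rcases mul_eq_zero.mp this with h | h
      · exact absurd h hne
      · exact h
    exact hx0 this
  exact le_antisymm (csInf_le ⟨-1, hlb⟩ hmem) (le_csInf ⟨-1, hmem⟩ hlb)

section Quad
variable {n : ℕ}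

lemma quad2 (M : Matrix (Fin n) (Fin n) ℝ) {u v : Fin n} (huv : u ≠ v) (a b : ℝ) :
    M.mulVec ((Pi.single u a : Fin n → ℝ) + Pi.single v b) ⬝ᵥ
      ((Pi.single u a : Fin n → ℝ) + Pi.single v b)
      = (M u u * a) * a + (M u v * b) * a + (M v u * a) * b + (M v v * b) * b := by
  rw [Matrix.mulVec_add, Matrix.mulVec_single, Matrix.mulVec_single]
  simp only [add_dotProduct, dotProduct_add, dotProduct_single, Pi.add_apply, Pi.smul_apply,
    Matrix.col_apply, op_smul_eq_mul]
  ring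

lemma dot2 {u v : Fin n} (huv : u ≠ v) (a b : ℝ) :
    ((Pi.single u a : Fin n → ℝ) + Pi.single v b) ⬝ᵥ
      ((Pi.single u a : Fin n → ℝ) + Pi.single v b) = a * a + b * b := by
  simp only [add_dotProduct, dotProduct_add, dotProduct_single, single_dotProduct,
    Pi.add_apply, Pi.single_apply, if_neg huv, if_neg (Ne.symm huv), if_pos rfl, if_true]
  ring

lemma quad3 (M : Matrix (Fin n) (Fin n) ℝ) (u v w : Fin n) (a b c : ℝ) :
    M.mulVec ((Pi.single u a : Fin n → ℝ) + Pi.single v b + Pi.single w c) ⬝ᵥ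
      ((Pi.single u a : Fin n → ℝ) + Pi.single v b + Pi.single w c)
      = (M u u * a) * a + (M u v * b) * a + (M u w * c) * a
      + (M v u * a) * b + (M v v * b) * b + (M v w * c) * b
      + (M w u * a) * c + (M w v * b) * c + (M w w * c) * c := by
  rw [Matrix.mulVec_add, Matrix.mulVec_add, Matrix.mulVec_single, Matrix.mulVec_single,
    Matrix.mulVec_single]
  simp only [add_dotProduct, dotProduct_add, dotProduct_single, Pi.add_apply, Pi.smul_apply,
    Matrix.col_apply, op_smul_eq_mul]
  ring

lemma dot3 {u v w : Fin n} (huv : u ≠ v) (hvw : v ≠ w) (huw : u ≠ w) (a b c : ℝ) :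
    ((Pi.single u a : Fin n → ℝ) + Pi.single v b + Pi.single w c) ⬝ᵥ
      ((Pi.single u a : Fin n → ℝ) + Pi.single v b + Pi.single w c)
      = a * a + b * b + c * c := by
  simp only [add_dotProduct, dotProduct_add, dotProduct_single, single_dotProduct,
    Pi.add_apply, Pi.single_apply, if_neg huv, if_neg (Ne.symm huv), if_neg hvw,
    if_neg (Ne.symm hvw), if_neg huw, if_neg (Ne.symm huw), if_pos rfl, if_true]
  ring

lemma single2_ne {u v : Fin n} (huv : u ≠ v) {a b : ℝ} (ha : a ≠ 0) :
    ((Pi.single u a : Fin n → ℝ) + Pi.single v b) ≠ 0 := by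
  intro h
  have := congrFun h u
  simp only [Pi.add_apply, Pi.single_apply, if_pos rfl, if_neg huv, Pi.zero_apply,
    add_zero, if_true] at this
  exact ha this

lemma single3_ne {u v w : Fin n} (huv : u ≠ v) (huw : u ≠ w) {a b c : ℝ} (ha : a ≠ 0) :
    ((Pi.single u a : Fin n → ℝ) + Pi.single v b + Pi.single w c) ≠ 0 := by
  intro h
  have := congrFun h u
  simp only [Pi.add_apply, Pi.single_apply, if_pos rfl, if_neg huv,
    if_neg huw, Pi.zero_apply, add_zero, if_true] at this
  exact ha this
end Quad


/-- For a connected signed graph `Σ` on `n ≥ 2` vertices,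
`λₙ(D^max(Σ)) = λₙ(D^min(Σ)) = -1` iff `Σ` is a balanced signed complete graph. -/
theorem stmt14 (n : ℕ) (hn : 2 ≤ n) (G : SimpleGraph (Fin n)) (σ : Fin n → Fin n → ℝ)
    (hG : G.Connected) (hσ : EdgeSigns G σ) :
    (lambdaMin (Dmax G σ) = -1 ∧ lambdaMin (Dmin G σ) = -1) ↔
    (G = ⊤ ∧ IsBalanced G σ) := by
  classical
  have hn0 : 0 < n := by omega
  have hherm : (Dmax G σ).IsHermitian := by
    show (Dmax G σ)ᴴ = Dmax G σ
    ext i j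
    rw [Matrix.conjTranspose_apply, star_trivial]
    show sigmaMax G σ j i * (G.dist j i : ℝ) = sigmaMax G σ i j * (G.dist i j : ℝ)
    rw [sigmaMax_comm hσ, SimpleGraph.dist_comm]
  have hdiag : ∀ i, Dmax G σ i i = 0 := by
    intro i; show sigmaMax G σ i i * (G.dist i i : ℝ) = 0
    rw [SimpleGraph.dist_self]; simp
  constructor
  · rintro ⟨hmax, _hmin⟩
    have htop : G = ⊤ := by
      by_contra hne
      have hex : ∃ u v : Fin n, u ≠ v ∧ ¬ G.Adj u v := by
        by_contra hc
        push_neg at hc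
        apply hne
        ext u v
        simp only [SimpleGraph.top_adj]
        exact ⟨fun h => h.ne, fun h => hc u v h⟩
      obtain ⟨u, v, huv, hnadj⟩ := hex
      have hd1 : G.dist u v ≠ 1 := fun h => hnadj (SimpleGraph.dist_eq_one_iff_adj.mp h)
      have hd0 : 0 < G.dist u v := hG.pos_dist_of_ne huv
      have hd2 : 2 ≤ G.dist u v := by omega
      have hd2' : (2:ℝ) ≤ (G.dist u v : ℝ) := by exact_mod_cast hd2
      set s : ℝ := sigmaMax G σ u v with hs
      have hs2 : s * s = 1 := by
        rcases sigmaMax_pm hG hσ u v with h | h <;> rw [hs, h] <;> norm_num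
      have hMuv : Dmax G σ u v = s * (G.dist u v : ℝ) := rfl
      have hMvu : Dmax G σ v u = s * (G.dist u v : ℝ) := by
        show sigmaMax G σ v u * (G.dist v u : ℝ) = s * (G.dist u v : ℝ)
        rw [← sigmaMax_comm hσ, SimpleGraph.dist_comm, hs]
      have hxne := single2_ne huv (one_ne_zero (α := ℝ)) (b := -s)
      have hQ := quad2 (Dmax G σ) huv 1 (-s)
      have hdot := dot2 huv 1 (-s)
      rw [hMuv, hMvu, hdiag, hdiag] at hQ
      have hray := rayleigh_bound hn0 _ hherm _ hxne
      rw [hmax, hQ, hdot] at hray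
      nlinarith [hray, hs2, hd2']
    refine ⟨htop, ?_⟩
    by_contra hnb
    have hAdj : ∀ a b : Fin n, a ≠ b → G.Adj a b := fun a b h => by rw [htop]; exact h
    have hex : ∃ a b c : Fin n, a ≠ b ∧ b ≠ c ∧ c ≠ a ∧ σ a b * σ b c * σ c a = -1 := by
      by_contra hc
      push_neg at hc
      apply hnb
      apply balanced_of_tri htop hσ
      intro a b c hab hbc hca
      have hcc := hc a b c hab hbc hca
      rcases hσ.2 a b (hAdj a b hab) with e | e <;>
        rcases hσ.2 b c (hAdj b c hbc) with f | f <;>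
        rcases hσ.2 c a (hAdj c a hca) with g | g <;>
        rw [e, f, g] at hcc ⊢ <;> norm_num at hcc <;> norm_num
    obtain ⟨a, b, c, hab, hbc, hca, hprod⟩ := hex
    have hE : ∀ i j : Fin n, i ≠ j → Dmax G σ i j = σ i j := by
      intro i j hij
      show sigmaMax G σ i j * (G.dist i j : ℝ) = σ i j
      rw [sigmaMax_of_adj (hAdj i j hij), SimpleGraph.dist_eq_one_iff_adj.mpr (hAdj i j hij)]
      norm_num
    have hac : a ≠ c := fun h => hca h.symm
    have hxne := single3_ne hab hac (one_ne_zero (α := ℝ)) (b := -σ a b) (c := -σ a c)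
    have hQ := quad3 (Dmax G σ) a b c 1 (-σ a b) (-σ a c)
    have hdot := dot3 hab hbc hac 1 (-σ a b) (-σ a c)
    rw [hdiag, hdiag, hdiag, hE a b hab, hE a c hac, hE b a (Ne.symm hab),
      hE b c hbc, hE c a hca, hE c b (Ne.symm hbc)] at hQ
    have hba : σ b a = σ a b := hσ.1 b a
    have hcb : σ c b = σ b c := hσ.1 c b
    have hacs : σ a c = σ c a := hσ.1 a c
    have hp2 : σ a b * σ a b = 1 := by
      rcases hσ.2 a b (hAdj a b hab) with e | e <;> rw [e] <;> norm_num
    have hr2 : σ c a * σ c a = 1 := by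
      rcases hσ.2 c a (hAdj c a hca) with e | e <;> rw [e] <;> norm_num
    have hQval : (Dmax G σ).mulVec ((Pi.single a (1:ℝ) : Fin n → ℝ) + Pi.single b (-σ a b)
        + Pi.single c (-σ a c)) ⬝ᵥ ((Pi.single a (1:ℝ) : Fin n → ℝ) + Pi.single b (-σ a b)
        + Pi.single c (-σ a c)) = -6 := by
      rw [hQ, hba, hcb, hacs]
      linear_combination (-2:ℝ) * hp2 + (-2:ℝ) * hr2 + 2 * hprod
    have hray := rayleigh_bound hn0 _ hherm _ hxne
    rw [hmax, hQval, hdot, hacs] at hray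
    nlinarith [hray, hp2, hr2]
  · rintro ⟨htop, hbal⟩
    have hAdj : ∀ a b : Fin n, a ≠ b → G.Adj a b := fun a b h => by rw [htop]; exact h
    have htri : ∀ a b c : Fin n, a ≠ b → b ≠ c → c ≠ a → σ a b * σ b c * σ c a = 1 :=
      fun a b c hab hbc hca =>
        triangle_sign hbal hab hbc hca (hAdj _ _ hab) (hAdj _ _ hbc) (hAdj _ _ hca)
    obtain ⟨τ, hτpm, hστ⟩ := tau_spec htop hσ htri ⟨0, hn0⟩
    have hτ2 : ∀ i, τ i * τ i = 1 := by
      intro i; rcases hτpm i with h | h <;> rw [h] <;> norm_num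
    have hEmax : ∀ i j, Dmax G σ i j = τ i * τ j - if i = j then (1:ℝ) else 0 := by
      intro i j
      by_cases h : i = j
      · subst h
        rw [hdiag, if_pos rfl, hτ2]
        norm_num
      · show sigmaMax G σ i j * (G.dist i j : ℝ) = _
        rw [sigmaMax_of_adj (hAdj i j h), SimpleGraph.dist_eq_one_iff_adj.mpr (hAdj i j h),
          if_neg h, hστ i j (hAdj i j h)]
        norm_num
    have hEmin : ∀ i j, Dmin G σ i j = τ i * τ j - if i = j then (1:ℝ) else 0 := by
      intro i j
      by_cases h : i = j
      · subst h
        show sigmaMin G σ i i * (G.dist i i : ℝ) = _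
        rw [SimpleGraph.dist_self, if_pos rfl, hτ2]
        norm_num
      · show sigmaMin G σ i j * (G.dist i j : ℝ) = _
        rw [sigmaMin_of_adj (hAdj i j h), SimpleGraph.dist_eq_one_iff_adj.mpr (hAdj i j h),
          if_neg h, hστ i j (hAdj i j h)]
        norm_num
    exact ⟨lambdaMin_of_tau n hn τ hτpm _ hEmax, lambdaMin_of_tau n hn τ hτpm _ hEmin⟩
end
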